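/- For every weighted r-graph (F,μ) there exists a sequence {F_n} of blowups of F such that v(F_n) → ∞, lim_{n→∞} |F_n|/v(F_n)^r = λ(F,μ), and for every clonable family 𝔥 of r-graphs, lim_{n→∞} d_𝔥(F_n)/v(F_n)^r = d^w_𝔥(F,μ). -/

import Mathlib

open Filter

namespace TuranGT

/-- An `r`-graph: an `r`-uniform hypergraph with vertex set `{0, ..., n-1} ⊆ ℕ`. -/
structure RGraph (r : ℕ) where
  n : ℕ
  edges : Finset (Finset ℕ)
  uniform : ∀ e ∈ edges, e.card = r
  valid : ∀ e ∈ edges, ∀ v ∈ e, v < n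

variable {r : ℕ}

/-- The link of a vertex `v`: the set of `(r-1)`-sets `I` with `I ∪ {v}` an edge. -/
def link (F : RGraph r) (v : ℕ) : Finset (Finset ℕ) :=
  (F.edges.filter fun e => v ∈ e).image fun e => e.erase v

/-- `G` contains a copy of `H` as a subgraph. -/
def ContainsCopy (G H : RGraph r) : Prop :=
  ∃ f : ℕ → ℕ, Set.InjOn f (Set.Iio H.n) ∧ (∀ v < H.n, f v < G.n) ∧
    ∀ e ∈ H.edges, e.image f ∈ G.edges

/-- `G` is `𝔉`-free: it contains no member of `𝔉` as a subgraph. -/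
def FreeFam (𝔉 : Set (RGraph r)) (G : RGraph r) : Prop :=
  ∀ H ∈ 𝔉, ¬ ContainsCopy G H

/-- The Turán number `ex(n, 𝔉)`. -/
noncomputable def exNum (r n : ℕ) (𝔉 : Set (RGraph r)) : ℕ :=
  sSup {k | ∃ G : RGraph r, G.n = n ∧ FreeFam 𝔉 G ∧ G.edges.card = k}

/-- `φ` witnesses that `G` is a blowup of `F`: fibers of `φ` form a blowup partition. -/
def IsBlowupMap (F G : RGraph r) (φ : ℕ → ℕ) : Prop :=
  (∀ v < G.n, φ v < F.n) ∧
    ∀ e : Finset ℕ, e ∈ G.edges ↔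
      ((∀ v ∈ e, v < G.n) ∧ Set.InjOn φ (e : Set ℕ) ∧ e.image φ ∈ F.edges)

/-- `G` is (isomorphic to) a blowup of `F` (cloning and deleting vertices). -/
def IsBlowup (F G : RGraph r) : Prop := ∃ φ : ℕ → ℕ, IsBlowupMap F G φ

/-- The family `𝔅(S)` of all blowups of `S`. -/
def blowupFam (S : RGraph r) : Set (RGraph r) := {G | IsBlowup S G}

/-- A family is clonable if it is closed under taking blowups. -/
def Clonable (𝔉 : Set (RGraph r)) : Prop :=
  ∀ F ∈ 𝔉, ∀ G : RGraph r, IsBlowup F G → G ∈ 𝔉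

/-- `m(𝔉, n)`: maximum number of edges of an `n`-vertex member of `𝔉`. -/
noncomputable def mFam (𝔉 : Set (RGraph r)) (n : ℕ) : ℕ :=
  sSup {k | ∃ F ∈ 𝔉, F.n = n ∧ F.edges.card = k}

/-- `m(𝔉) = lim_{n → ∞} m(𝔉, n)/n^r` (when the family is smooth). -/
noncomputable def mDen (𝔉 : Set (RGraph r)) : ℝ :=
  limUnder atTop fun n : ℕ => (mFam 𝔉 n : ℝ) / (n : ℝ) ^ r

/-- The edit distance `d_𝔥(F)` from `F` to the family `𝔥`. -/
noncomputable def distFam (𝔥 : Set (RGraph r)) (F : RGraph r) : ℝ :=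
  sInf {x : ℝ | ∃ H ∈ 𝔥, H.n = F.n ∧ x = ((symmDiff F.edges H.edges).card : ℝ)}

/-- `μ` is a probability distribution on the vertex set of `F`. -/
def IsWeight (F : RGraph r) (μ : ℕ → ℝ) : Prop :=
  (∀ v, 0 ≤ μ v) ∧ (∀ v, F.n ≤ v → μ v = 0) ∧ ∑ v ∈ Finset.range F.n, μ v = 1

/-- Weighted density `λ(F, μ)`. -/
noncomputable def lamW (F : RGraph r) (μ : ℕ → ℝ) : ℝ :=
  ∑ e ∈ F.edges, ∏ v ∈ e, μ v

/-- The Lagrangian `λ(F)`. -/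
noncomputable def lagrangian (F : RGraph r) : ℝ :=
  sSup {x : ℝ | ∃ μ, IsWeight F μ ∧ x = lamW F μ}

/-- `λ(𝔥)` for a family of r-graphs. -/
noncomputable def lamFam (𝔥 : Set (RGraph r)) : ℝ :=
  sSup {x : ℝ | ∃ H ∈ 𝔥, ∃ μ, IsWeight H μ ∧ x = lamW H μ}

/-- The uniform distribution `ξ_F`. -/
noncomputable def uniformW (F : RGraph r) : ℕ → ℝ :=
  fun v => if v < F.n then ((F.n : ℝ))⁻¹ else 0

/-- `(G, ν)` is a blowup of the weighted graph `(F, μ)`. -/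
def WIsBlowup (F : RGraph r) (μ : ℕ → ℝ) (G : RGraph r) (ν : ℕ → ℝ) : Prop :=
  IsWeight G ν ∧ ∃ φ : ℕ → ℕ, IsBlowupMap F G φ ∧
    ∀ i < F.n, μ i = ∑ v ∈ (Finset.range G.n).filter (fun v => φ v = i), ν v

/-- `d'(F1, F2, μ)` for graphs on a common vertex set. -/
noncomputable def dPrime (E1 E2 : Finset (Finset ℕ)) (μ : ℕ → ℝ) : ℝ :=
  ∑ e ∈ symmDiff E1 E2, ∏ v ∈ e, μ v

/-- The distance between weighted `r`-graphs. -/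
noncomputable def wDist (F1 : RGraph r) (μ1 : ℕ → ℝ) (F2 : RGraph r) (μ2 : ℕ → ℝ) : ℝ :=
  sInf {x : ℝ | ∃ (G1 G2 : RGraph r) (ν : ℕ → ℝ), G1.n = G2.n ∧
    WIsBlowup F1 μ1 G1 ν ∧ WIsBlowup F2 μ2 G2 ν ∧ x = dPrime G1.edges G2.edges ν}

/-- The weighted distance `d^w_𝔥(F, μ)` from a weighted graph to a family. -/
noncomputable def wDistFam (𝔥 : Set (RGraph r)) (F : RGraph r) (μ : ℕ → ℝ) : ℝ :=
  sInf {x : ℝ | ∃ H ∈ 𝔥, ∃ ν, IsWeight H ν ∧ x = wDist F μ H ν}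

/-- `𝔉` is `(𝔥, ε, α)`-locally stable. -/
def LocallyStable (𝔉 𝔥 : Set (RGraph r)) (ε α : ℝ) : Prop :=
  ∃ n0 : ℕ, ∀ F ∈ 𝔉, n0 ≤ F.n → distFam 𝔥 F ≤ ε * (F.n : ℝ) ^ r →
    (F.edges.card : ℝ) ≤ (mFam 𝔥 F.n : ℝ) - α * distFam 𝔥 F

/-- `𝔉` is `𝔥`-locally stable. -/
def HLocallyStable (𝔉 𝔥 : Set (RGraph r)) : Prop :=
  ∃ ε > (0 : ℝ), ∃ α > (0 : ℝ), LocallyStable 𝔉 𝔥 ε α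

/-- `𝔉` is `𝔥`-stable, i.e. `(𝔥, 1, α)`-locally stable for some `α > 0`. -/
def HStable (𝔉 𝔥 : Set (RGraph r)) : Prop :=
  ∃ α > (0 : ℝ), LocallyStable 𝔉 𝔥 1 α

/-- `𝔉` is `(𝔥, ε, α)`-vertex locally stable. -/
def VertexLocallyStable (𝔉 𝔥 : Set (RGraph r)) (ε α : ℝ) : Prop :=
  ∃ n0 : ℕ, ∀ F ∈ 𝔉, n0 ≤ F.n → distFam 𝔥 F ≤ ε * (F.n : ℝ) ^ r →
    (∀ v < F.n, ((r : ℝ) * mDen 𝔥 - ε) * (F.n : ℝ) ^ (r - 1) ≤ ((link F v).card : ℝ)) →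
    (F.edges.card : ℝ) ≤ (mFam 𝔥 F.n : ℝ) - α * distFam 𝔥 F

/-- `𝔉` is `𝔥`-vertex locally stable. -/
def HVertexLocallyStable (𝔉 𝔥 : Set (RGraph r)) : Prop :=
  ∃ ε > (0 : ℝ), ∃ α > (0 : ℝ), VertexLocallyStable 𝔉 𝔥 ε α

/-- `𝔉` is `(𝔥, ε, α)`-weight locally stable. -/
def WeightLocallyStable (𝔉 𝔥 : Set (RGraph r)) (ε α : ℝ) : Prop :=
  ∀ F ∈ 𝔉, ∀ μ : ℕ → ℝ, IsWeight F μ → wDistFam 𝔥 F μ ≤ ε →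
    lamW F μ ≤ lamFam 𝔥 - α * wDistFam 𝔥 F μ

/-- `𝔉` is `𝔥`-weight locally stable. -/
def HWeightLocallyStable (𝔉 𝔥 : Set (RGraph r)) : Prop :=
  ∃ ε > (0 : ℝ), ∃ α > (0 : ℝ), WeightLocallyStable 𝔉 𝔥 ε α

/-- `𝔉` is `𝔥`-weight stable: `(𝔥, 1, α)`-weight locally stable for some `α > 0`. -/
def HWeightStable (𝔉 𝔥 : Set (RGraph r)) : Prop :=
  ∃ α > (0 : ℝ), WeightLocallyStable 𝔉 𝔥 1 α

/-- `𝔉` is `𝔥`-weakly weight stable. -/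
def WeaklyWeightStable (𝔉 𝔥 : Set (RGraph r)) : Prop :=
  ∀ ε > (0 : ℝ), ∃ δ > (0 : ℝ), ∀ F ∈ 𝔉, ∀ μ : ℕ → ℝ, IsWeight F μ →
    lamFam 𝔥 - δ ≤ lamW F μ → wDistFam 𝔥 F μ ≤ ε

/-- The generalized triangle `T_r` on vertex set `{0, ..., 2r-2}` (for `r ≥ 2`),
with edges `D1 = {0,...,r-1}`, `D2 = {0,...,r-2} ∪ {r}`, `D3 = {r-1, r, ..., 2r-2}`. -/
def genTriangle (r : ℕ) : RGraph r where
  n := 2 * r - 1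
  edges :=
    if _h : 2 ≤ r then
      {Finset.range r, insert r (Finset.range (r - 1)), Finset.Ico (r - 1) (2 * r - 1)}
    else ∅
  uniform := by
    intro e he
    split_ifs at he with h
    · simp only [Finset.mem_insert, Finset.mem_singleton] at he
      rcases he with rfl | rfl | rfl
      · exact Finset.card_range r
      · rw [Finset.card_insert_of_notMem (by simp only [Finset.mem_range]; omega),
          Finset.card_range]
        omega
      · rw [Nat.card_Ico]
        omega
    · simp at he
  valid := by
    intro e he v hv
    split_ifs at he with h
    · simp only [Finset.mem_insert, Finset.mem_singleton] at he
      rcases he with rfl | rfl | rfl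
      · simp only [Finset.mem_range] at hv; omega
      · simp only [Finset.mem_insert, Finset.mem_range] at hv; omega
      · simp only [Finset.mem_Ico] at hv; omega
    · simp at he

/-- The family `Σ_r`: all `r`-graphs with three edges `D1, D2, D3` such that
`|D1 ∩ D2| = r - 1` and `D1 △ D2 ⊆ D3`. -/
def SigmaFam (r : ℕ) : Set (RGraph r) :=
  {G | ∃ D1 D2 D3 : Finset ℕ, G.edges = {D1, D2, D3} ∧
    D1 ≠ D2 ∧ D1 ≠ D3 ∧ D2 ≠ D3 ∧
    (D1 ∩ D2).card = r - 1 ∧ symmDiff D1 D2 ⊆ D3}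

/-- The complete graph `K_t` as a `2`-graph. -/
def completeGraph (t : ℕ) : RGraph 2 where
  n := t
  edges := Finset.powersetCard 2 (Finset.range t)
  uniform := fun _e he => (Finset.mem_powersetCard.1 he).2
  valid := fun _e he v hv => Finset.mem_range.1 ((Finset.mem_powersetCard.1 he).1 hv)

/-- `S` is an `(m, r, r-1)` Steiner system: each `(r-1)`-subset of the vertex set
lies in exactly one edge. -/
def IsSteiner (m : ℕ) (S : RGraph r) : Prop :=
  S.n = m ∧ ∀ I : Finset ℕ, (∀ v ∈ I, v < S.n) → I.card = r - 1 →
    ∃! e, e ∈ S.edges ∧ I ⊆ e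

/-- `F` covers pairs: every two vertices lie in a common edge. -/
def CoversPairs (F : RGraph r) : Prop :=
  ∀ u < F.n, ∀ v < F.n, ∃ e ∈ F.edges, u ∈ e ∧ v ∈ e

/-- Isomorphism of `r`-graphs. -/
def Isomorphic (F G : RGraph r) : Prop :=
  F.n = G.n ∧ ∃ f : ℕ → ℕ, Set.InjOn f (Set.Iio F.n) ∧ (∀ v < F.n, f v < G.n) ∧
    ∀ e : Finset ℕ, e ∈ F.edges ↔ ((∀ v ∈ e, v < F.n) ∧ e.image f ∈ G.edges)

/-- The support of a weighting. -/
noncomputable def suppW (F : RGraph r) (μ : ℕ → ℝ) : Finset ℕ :=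
  (Finset.range F.n).filter fun v => μ v ≠ 0

/-- `G` is isomorphic to the subgraph of `F` induced on the vertex set `S`. -/
def IsIsoInduced (F : RGraph r) (S : Finset ℕ) (G : RGraph r) : Prop :=
  ∃ f : ℕ → ℕ, Set.InjOn f (Set.Iio G.n) ∧ (Finset.range G.n).image f = S ∧
    ∀ e : Finset ℕ, e ∈ G.edges ↔ ((∀ v ∈ e, v < G.n) ∧ e.image f ∈ F.edges)

/-- An `r`-graph is thin if every `(r-1)`-set lies in at most one edge. -/
def ThinG (F : RGraph r) : Prop :=
  ∀ I : Finset ℕ, I.card = r - 1 → ∀ e1 ∈ F.edges, ∀ e2 ∈ F.edges,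
    I ⊆ e1 → I ⊆ e2 → e1 = e2

/-- A Steiner system (or any graph) is balanced if its Lagrangian is attained by
the uniform distribution. -/
def Balanced (F : RGraph r) : Prop := lagrangian F = lamW F (uniformW F)

/-- `e(m, r) = C(m, r-1) / (r m^r)`. -/
noncomputable def eDen (m r : ℕ) : ℝ :=
  (m.choose (r - 1) : ℝ) / ((r : ℝ) * (m : ℝ) ^ r)

/-- `d(m, r) = C(m-1, r-2) / ((r-1) m^{r-1})`. -/
noncomputable def dDen (m r : ℕ) : ℝ :=
  ((m - 1).choose (r - 2) : ℝ) / (((r : ℝ) - 1) * (m : ℝ) ^ (r - 1))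

/-- `S` is uniquely dense around `Σ_r`: the uniform weighting of `S` strictly maximizes the
weighted density among weighted `Σ_r`-free `r`-graphs covering pairs. -/
def UniquelyDense (S : RGraph r) : Prop :=
  (∀ F : RGraph r, FreeFam (SigmaFam r) F → CoversPairs F → ∀ μ : ℕ → ℝ, IsWeight F μ →
    lamW F μ ≤ lamW S (uniformW S)) ∧
  ∀ F : RGraph r, FreeFam (SigmaFam r) F → CoversPairs F → ∀ μ : ℕ → ℝ, IsWeight F μ →
    lamW F μ = lamW S (uniformW S) → Isomorphic F S ∧ μ = uniformW F


/-! ### Auxiliary machinery -/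

/-- The lift of an edge set along a map `β` to vertex set `range N`. -/
def lift (r N : ℕ) (β : ℕ → ℕ) (S : Finset (Finset ℕ)) : Finset (Finset ℕ) :=
  ((Finset.range N).powersetCard r).filter fun e => (e.image β).card = r ∧ e.image β ∈ S

lemma mem_lift {N : ℕ} {β : ℕ → ℕ} {S : Finset (Finset ℕ)}
    (hS : ∀ E ∈ S, E.card = r) {e : Finset ℕ} :
    e ∈ lift r N β S ↔ (∀ v ∈ e, v < N) ∧ Set.InjOn β (e : Set ℕ) ∧ e.image β ∈ S := by
  unfold lift
  simp only [Finset.mem_filter, Finset.mem_powersetCard]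
  constructor
  · rintro ⟨⟨hsub, hcard⟩, hic, him⟩
    refine ⟨fun v hv => Finset.mem_range.1 (hsub hv), ?_, him⟩
    rw [← Finset.card_image_iff]; rw [hic, hcard]
  · rintro ⟨hsub, hinj, him⟩
    have hcard : (e.image β).card = e.card := Finset.card_image_iff.2 hinj
    have her : (e.image β).card = r := hS _ him
    exact ⟨⟨fun v hv => Finset.mem_range.2 (hsub v hv), by omega⟩, her, him⟩

/-- The blowup of `B` along `β` with `N` vertices. -/
def liftG (B : RGraph r) (β : ℕ → ℕ) (N : ℕ) : RGraph r where
  n := N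
  edges := lift r N β B.edges
  uniform := fun e he => (Finset.mem_powersetCard.1 (Finset.mem_filter.1 he).1).2
  valid := fun e he v hv =>
    Finset.mem_range.1 ((Finset.mem_powersetCard.1 (Finset.mem_filter.1 he).1).1 hv)

lemma isBlowupMap_liftG (B : RGraph r) (β : ℕ → ℕ) (N : ℕ)
    (hβ : ∀ v < N, β v < B.n) : IsBlowupMap B (liftG B β N) β := by
  refine ⟨hβ, fun e => ?_⟩
  exact mem_lift B.uniform

lemma lift_congr {N : ℕ} {β β' : ℕ → ℕ} (S : Finset (Finset ℕ))
    (h : ∀ v < N, β v = β' v) : lift r N β S = lift r N β' S := by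
  unfold lift
  apply Finset.filter_congr
  intro e he
  have : e.image β = e.image β' := by
    apply Finset.image_congr
    intro v hv
    exact h v (Finset.mem_range.1 ((Finset.mem_powersetCard.1 he).1 hv))
  rw [this]

lemma lift_comp {B G1 : RGraph r} {φ : ℕ → ℕ} (hφ : IsBlowupMap B G1 φ)
    {N : ℕ} {β : ℕ → ℕ} (hβ : ∀ v < N, β v < G1.n) :
    lift r N (fun x => φ (β x)) B.edges = lift r N β G1.edges := by
  unfold lift
  apply Finset.filter_congr
  intro e he
  obtain ⟨hsub, hcard⟩ := Finset.mem_powersetCard.1 he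
  have hsub' : ∀ v ∈ e, v < N := fun v hv => Finset.mem_range.1 (hsub hv)
  have himim : e.image (fun x => φ (β x)) = (e.image β).image φ := by
    rw [Finset.image_image]; rfl
  rw [himim]
  constructor
  · rintro ⟨hc, hm⟩
    have h1 : (e.image β).card = r := by
      have := Finset.card_image_le (s := e.image β) (f := φ)
      have := Finset.card_image_le (s := e) (f := β)
      omega
    have hinjφ : Set.InjOn φ ((e.image β) : Set ℕ) := by
      rw [← Finset.card_image_iff]; omega
    refine ⟨h1, (hφ.2 (e.image β)).2 ⟨?_, hinjφ, hm⟩⟩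
    intro v hv
    obtain ⟨x, hx, rfl⟩ := Finset.mem_image.1 hv
    exact hβ x (hsub' x hx)
  · rintro ⟨hc, hm⟩
    have := (hφ.2 (e.image β)).1 hm
    obtain ⟨_, hinj, hBm⟩ := this
    have : ((e.image β).image φ).card = (e.image β).card := Finset.card_image_iff.2 hinj
    exact ⟨by omega, hBm⟩

lemma lift_symmDiff {N : ℕ} {β : ℕ → ℕ} (S T : Finset (Finset ℕ)) :
    lift r N β (symmDiff S T) = symmDiff (lift r N β S) (lift r N β T) := by
  ext e
  simp only [lift, Finset.mem_symmDiff, Finset.mem_filter]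
  tauto

lemma card_lift_singleton {N : ℕ} {β : ℕ → ℕ} {E : Finset ℕ} (hE : E.card = r) :
    (lift r N β {E}).card = ∏ i ∈ E, ((Finset.range N).filter fun v => β v = i).card := by
  classical
  set fib : ℕ → Finset ℕ := fun i => (Finset.range N).filter fun v => β v = i with hfib
  set Φ : (∀ a ∈ E, ℕ) → Finset ℕ := fun f => E.attach.image fun i => f i.1 i.2 with hΦ
  have hSsing : ∀ X ∈ ({E} : Finset (Finset ℕ)), X.card = r := by
    intro X hX; rw [Finset.mem_singleton.1 hX]; exact hE
  have key : lift r N β {E} = (E.pi fun i => fib i).image Φ := by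
    apply Finset.Subset.antisymm
    · intro e he
      rw [mem_lift hSsing] at he
      obtain ⟨hsub, hinj, him⟩ := he
      rw [Finset.mem_singleton] at him
      have hex : ∀ i ∈ E, ∃ x, x ∈ e ∧ β x = i := by
        intro i hi
        rw [← him] at hi
        obtain ⟨x, hx, hbx⟩ := Finset.mem_image.1 hi
        exact ⟨x, hx, hbx⟩
      choose x hxe hxβ using hex
      refine Finset.mem_image.2 ⟨fun i hi => x i hi, ?_, ?_⟩
      · rw [Finset.mem_pi]
        intro i hi
        exact Finset.mem_filter.2 ⟨Finset.mem_range.2 (hsub _ (hxe i hi)), hxβ i hi⟩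
      · apply Finset.Subset.antisymm
        · intro y hy
          obtain ⟨i, _, rfl⟩ := Finset.mem_image.1 hy
          exact hxe _ _
        · intro y hy
          have hby : β y ∈ E := by rw [← him]; exact Finset.mem_image_of_mem β hy
          have : x (β y) hby = y := by
            apply hinj (Finset.mem_coe.2 (hxe _ hby)) (Finset.mem_coe.2 hy)
            exact hxβ _ hby
          refine Finset.mem_image.2 ⟨⟨β y, hby⟩, Finset.mem_attach _ _, this⟩
    · intro e he
      obtain ⟨f, hf, rfl⟩ := Finset.mem_image.1 he
      rw [Finset.mem_pi] at hf
      have hmem : ∀ i (hi : i ∈ E), f i hi ∈ fib i := hf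
      have himE : (Φ f).image β = E := by
        apply Finset.Subset.antisymm
        · intro y hy
          obtain ⟨x, hx, rfl⟩ := Finset.mem_image.1 hy
          obtain ⟨i, _, rfl⟩ := Finset.mem_image.1 hx
          have := Finset.mem_filter.1 (hmem i.1 i.2)
          rw [this.2]; exact i.2
        · intro i hi
          have := Finset.mem_filter.1 (hmem i hi)
          refine Finset.mem_image.2 ⟨f i hi, ?_, this.2⟩
          exact Finset.mem_image.2 ⟨⟨i, hi⟩, Finset.mem_attach _ _, rfl⟩
      have hc1 : (Φ f).card ≤ r := by
        calc (Φ f).card ≤ E.attach.card := Finset.card_image_le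
        _ = r := by rw [Finset.card_attach, hE]
      have hc2 : r ≤ (Φ f).card := by
        calc r = ((Φ f).image β).card := by rw [himE, hE]
        _ ≤ (Φ f).card := Finset.card_image_le
      rw [mem_lift hSsing]
      refine ⟨?_, ?_, by rw [himE]; exact Finset.mem_singleton_self E⟩
      · intro v hv
        obtain ⟨i, _, rfl⟩ := Finset.mem_image.1 hv
        exact Finset.mem_range.1 (Finset.mem_filter.1 (hmem i.1 i.2)).1
      · rw [← Finset.card_image_iff, himE, hE]; omega
  rw [key]
  rw [Finset.card_image_of_injOn, Finset.card_pi]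
  intro f hf g hg hfg
  rw [Finset.mem_coe, Finset.mem_pi] at hf hg
  funext i hi
  have hfi : f i hi ∈ Φ f := Finset.mem_image.2 ⟨⟨i, hi⟩, Finset.mem_attach _ _, rfl⟩
  rw [hfg] at hfi
  obtain ⟨j, _, hj⟩ := Finset.mem_image.1 hfi
  have hβf : β (f i hi) = i := (Finset.mem_filter.1 (hf i hi)).2
  have hβg : β (g j.1 j.2) = j.1 := (Finset.mem_filter.1 (hg j.1 j.2)).2
  rw [← hj] at hβf ⊢
  rw [hβg] at hβf
  subst hβf
  rfl

lemma card_lift {N : ℕ} {β : ℕ → ℕ} {S : Finset (Finset ℕ)} (hS : ∀ E ∈ S, E.card = r) :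
    (lift r N β S).card
      = ∑ E ∈ S, ∏ i ∈ E, ((Finset.range N).filter fun v => β v = i).card := by
  classical
  have hsplit : lift r N β S = S.biUnion fun E => lift r N β {E} := by
    ext e
    simp only [Finset.mem_biUnion, lift, Finset.mem_filter, Finset.mem_singleton]
    constructor
    · rintro ⟨h1, h2, h3⟩; exact ⟨e.image β, h3, h1, h2, rfl⟩
    · rintro ⟨E, hE, h1, h2, rfl⟩; exact ⟨h1, h2, hE⟩
  rw [hsplit, Finset.card_biUnion]
  · exact Finset.sum_congr rfl fun E hE => card_lift_singleton (hS E hE)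
  · intro E1 h1 E2 h2 hne
    simp only [Finset.disjoint_left]
    intro e he1 he2
    simp only [lift, Finset.mem_filter, Finset.mem_singleton] at he1 he2
    exact hne (he1.2.2 ▸ he2.2.2 ▸ rfl)

/-- The step map determined by a cumulative distribution `a` with `t` steps, scale `N`. -/
noncomputable def stepMap (a : ℕ → ℝ) (t N x : ℕ) : ℕ :=
  ((Finset.range t).filter fun l => (⌊a (l+1) * N⌋ : ℤ) ≤ (x : ℤ)).card

lemma floor_mono_of_monotone {a : ℕ → ℝ} (ha : Monotone a) (N : ℕ) :
    Monotone fun l => (⌊a l * N⌋ : ℤ) := by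
  intro l1 l2 h
  exact Int.floor_le_floor (mul_le_mul_of_nonneg_right (ha h) (Nat.cast_nonneg N))

lemma stepMap_lt {a : ℕ → ℝ} {t N x : ℕ} (ht : 1 ≤ t)
    (hx : (x : ℤ) < ⌊a t * N⌋) : stepMap a t N x < t := by
  have hsub : ((Finset.range t).filter fun l => (⌊a (l+1) * N⌋ : ℤ) ≤ (x : ℤ))
      ⊆ (Finset.range t).erase (t - 1) := by
    intro l hl
    rw [Finset.mem_filter] at hl
    rw [Finset.mem_erase]
    refine ⟨?_, hl.1⟩
    rintro rfl
    have : t - 1 + 1 = t := by omega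
    rw [this] at hl
    omega
  have := Finset.card_le_card hsub
  have h2 : ((Finset.range t).erase (t - 1)).card = t - 1 := by
    rw [Finset.card_erase_of_mem (Finset.mem_range.2 (by omega)), Finset.card_range]
  unfold stepMap
  omega

lemma stepMap_eq {a : ℕ → ℝ} (ha : Monotone a) {t N x l : ℕ} (hl : l < t)
    (h1 : (⌊a l * N⌋ : ℤ) ≤ (x : ℤ)) (h2 : (x : ℤ) < ⌊a (l+1) * N⌋) :
    stepMap a t N x = l := by
  have hmono := floor_mono_of_monotone ha N
  have : ((Finset.range t).filter fun l' => (⌊a (l'+1) * N⌋ : ℤ) ≤ (x : ℤ))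
      = Finset.range l := by
    ext l'
    simp only [Finset.mem_filter, Finset.mem_range]
    constructor
    · rintro ⟨hlt, hle⟩
      by_contra h
      push_neg at h
      have : (⌊a (l+1) * N⌋ : ℤ) ≤ ⌊a (l'+1) * N⌋ := hmono (by omega)
      omega
    · intro h
      refine ⟨by omega, ?_⟩
      have : (⌊a (l'+1) * N⌋ : ℤ) ≤ ⌊a l * N⌋ := hmono (by omega)
      omega
  unfold stepMap
  rw [this, Finset.card_range]

lemma stepMap_spec {a : ℕ → ℝ} (ha : Monotone a) (h0 : a 0 = 0) {t N x : ℕ} (ht : 1 ≤ t)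
    (hx : (x : ℤ) < ⌊a t * N⌋) :
    (⌊a (stepMap a t N x) * N⌋ : ℤ) ≤ (x : ℤ) ∧
      (x : ℤ) < ⌊a (stepMap a t N x + 1) * N⌋ := by
  have hmono := floor_mono_of_monotone ha N
  have hlt := stepMap_lt ht hx
  set l := stepMap a t N x with hldef
  set Fl := (Finset.range t).filter fun l' => (⌊a (l'+1) * N⌋ : ℤ) ≤ (x : ℤ) with hFl
  have hcard : Fl.card = l := rfl
  constructor
  · rcases Nat.eq_zero_or_pos l with h | h
    · rw [h, h0]
      simp
    · -- there is l' ∈ Fl with l - 1 ≤ l'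
      by_contra hcon
      push_neg at hcon
      have hsub : Fl ⊆ Finset.range (l - 1) := by
        intro l' hl'
        rw [Finset.mem_range]
        by_contra h'
        push_neg at h'
        have h'' : (⌊a l * N⌋ : ℤ) ≤ ⌊a (l'+1) * N⌋ := hmono (by omega)
        have := (Finset.mem_filter.1 hl').2
        omega
      have := Finset.card_le_card hsub
      rw [Finset.card_range, hcard] at this
      omega
  · by_contra hcon
    push_neg at hcon
    have hsub : Finset.range (l + 1) ⊆ Fl := by
      intro l' hl'
      rw [Finset.mem_range] at hl'
      rw [Finset.mem_filter, Finset.mem_range]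
      refine ⟨by omega, ?_⟩
      have : (⌊a (l'+1) * N⌋ : ℤ) ≤ ⌊a (l+1) * N⌋ := hmono (by omega)
      omega
    have := Finset.card_le_card hsub
    rw [Finset.card_range, hcard] at this
    omega

lemma sum_range_sub_monotone {g : ℕ → ℕ} (hg : Monotone g) (n : ℕ) :
    ∑ i ∈ Finset.range n, (g (i+1) - g i) = g n - g 0 := by
  induction n with
  | zero => simp
  | succ n ih =>
    rw [Finset.sum_range_succ, ih]
    have h1 : g 0 ≤ g n := hg (by omega)
    have h2 : g n ≤ g (n+1) := hg (by omega)
    omega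

lemma prod_expand (S : Finset ℕ) (x : ℕ → ℝ) (B : ℝ)
    (hx : ∀ v ∈ S, 0 ≤ x v ∧ x v + 1 ≤ B) :
    ∏ v ∈ S, (x v + 1) ≤ ∏ v ∈ S, x v + S.card * B ^ (S.card - 1) := by
  classical
  induction S using Finset.induction_on with
  | empty => simp
  | @insert a S ha ih =>
    have hxa := hx a (Finset.mem_insert_self a S)
    have hx' : ∀ v ∈ S, 0 ≤ x v ∧ x v + 1 ≤ B := fun v hv =>
      hx v (Finset.mem_insert_of_mem hv)
    have hB1 : 1 ≤ B := by nlinarith [hxa.1, hxa.2]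
    have hB0 : 0 ≤ B := by linarith
    have hprodle : ∏ v ∈ S, x v ≤ B ^ S.card := by
      calc ∏ v ∈ S, x v ≤ ∏ v ∈ S, B := by
            apply Finset.prod_le_prod (fun v hv => (hx' v hv).1)
            intro v hv
            nlinarith [(hx' v hv).1, (hx' v hv).2]
        _ = B ^ S.card := Finset.prod_const B
    have hprodnn : 0 ≤ ∏ v ∈ S, x v := Finset.prod_nonneg fun v hv => (hx' v hv).1
    rw [Finset.prod_insert ha, Finset.prod_insert ha,
      Finset.card_insert_of_notMem ha]
    have ihS := ih hx'
    have hpow : (S.card : ℝ) * (B ^ (S.card - 1) * B) ≤ (S.card : ℝ) * B ^ S.card := by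
      rcases Nat.eq_zero_or_pos S.card with h | h
      · rw [h]; norm_num
      · have h' : S.card - 1 + 1 = S.card := by omega
        have : B ^ (S.card - 1) * B = B ^ S.card := by
          calc B ^ (S.card - 1) * B = B ^ (S.card - 1 + 1) := (pow_succ B _).symm
            _ = B ^ S.card := by rw [h']
        rw [this]
    have hstep : (x a + 1) * ∏ v ∈ S, (x v + 1)
        ≤ (x a + 1) * (∏ v ∈ S, x v + S.card * B ^ (S.card - 1)) := by
      apply mul_le_mul_of_nonneg_left ihS
      linarith [hxa.1]
    have hpowcard : (S.card + 1 : ℝ) * B ^ (S.card + 1 - 1) = (S.card + 1 : ℝ) * B ^ S.card := by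
      norm_num
    calc (x a + 1) * ∏ v ∈ S, (x v + 1)
        ≤ (x a + 1) * (∏ v ∈ S, x v + S.card * B ^ (S.card - 1)) := hstep
      _ = x a * ∏ v ∈ S, x v + (∏ v ∈ S, x v + (x a + 1) * (S.card * B ^ (S.card - 1))) := by
          ring
      _ ≤ x a * ∏ v ∈ S, x v + (B ^ S.card + B * (S.card * B ^ (S.card - 1))) := by
          have h1 : (x a + 1) * ((S.card : ℝ) * B ^ (S.card - 1))
              ≤ B * (S.card * B ^ (S.card - 1)) := by
            apply mul_le_mul_of_nonneg_right hxa.2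
            positivity
          linarith
      _ ≤ x a * ∏ v ∈ S, x v + ((S.card : ℝ) + 1) * B ^ (S.card + 1 - 1) := by
          rw [hpowcard]
          have heq : B * ((S.card : ℝ) * B ^ (S.card - 1)) = (S.card : ℝ) * (B ^ (S.card - 1) * B) := by
            ring
          rw [heq]
          linarith [hpow]
      _ = x a * ∏ v ∈ S, x v + ((S.card + 1 : ℕ) : ℝ) * B ^ (S.card + 1 - 1) := by
          push_cast
          ring

lemma one_add_pow_le {x : ℝ} (h0 : 0 ≤ x) (h1 : x ≤ 1) (r : ℕ) :
    (1 + x) ^ r ≤ 1 + (2 ^ r - 1) * x := by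
  induction r with
  | zero => norm_num
  | succ r ih =>
    have h2 : (1:ℝ) ≤ 2 ^ r := one_le_pow₀ (by norm_num)
    have hq : (0:ℝ) ≤ (2 ^ r - 1) * x := by
      apply mul_nonneg
      · linarith
      · exact h0
    calc (1 + x) ^ (r+1) = (1 + x) ^ r * (1 + x) := by rw [pow_succ]
      _ ≤ (1 + (2 ^ r - 1) * x) * (1 + x) := by
          apply mul_le_mul_of_nonneg_right ih
          linarith
      _ = 1 + (2 ^ (r+1) - 1) * x + (2 ^ r - 1) * x * (x - 1) := by
          rw [pow_succ]
          ring
      _ ≤ 1 + (2 ^ (r+1) - 1) * x := by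
          have : (2 ^ r - 1) * x * (x - 1) ≤ 0 := by
            apply mul_nonpos_of_nonneg_of_nonpos hq
            linarith
          linarith

/-- Scaled floor of a cumulative distribution. -/
noncomputable def gfl (a : ℕ → ℝ) (N l : ℕ) : ℕ := (⌊a l * N⌋).toNat

section gfl

variable {a : ℕ → ℝ} {t N : ℕ}

lemma gfl_mono (ha : Monotone a) (h0 : a 0 = 0) : Monotone (gfl a N) := by
  intro l1 l2 h
  exact Int.toNat_le_toNat (floor_mono_of_monotone ha N h)

lemma a_nonneg (ha : Monotone a) (h0 : a 0 = 0) (l : ℕ) : 0 ≤ a l := by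
  rw [← h0]; exact ha (Nat.zero_le l)

lemma gfl_cast (ha : Monotone a) (h0 : a 0 = 0) (l : ℕ) :
    ((gfl a N l : ℤ)) = ⌊a l * N⌋ := by
  apply Int.toNat_of_nonneg
  apply Int.floor_nonneg.2
  exact mul_nonneg (a_nonneg ha h0 l) (Nat.cast_nonneg N)

lemma gfl_zero (h0 : a 0 = 0) : gfl a N 0 = 0 := by
  unfold gfl
  rw [h0]
  norm_num

lemma gfl_top (ht : a t = 1) : gfl a N t = N := by
  unfold gfl
  rw [ht, one_mul]
  norm_num

lemma gfl_le_real (ha : Monotone a) (h0 : a 0 = 0) (l : ℕ) :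
    (gfl a N l : ℝ) ≤ a l * N := by
  have h := gfl_cast (N := N) ha h0 l
  have := Int.floor_le (a l * N)
  have hcast : ((gfl a N l : ℤ) : ℝ) = (gfl a N l : ℝ) := by push_cast; ring
  rw [← hcast, h]
  exact this

lemma real_lt_gfl (ha : Monotone a) (h0 : a 0 = 0) (l : ℕ) :
    a l * N - 1 < (gfl a N l : ℝ) := by
  have h := gfl_cast (N := N) ha h0 l
  have := Int.sub_one_lt_floor (a l * N)
  have hcast : ((gfl a N l : ℤ) : ℝ) = (gfl a N l : ℝ) := by push_cast; ring
  rw [← hcast, h]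
  exact this

/-- The fiber of the step map over `l < t` is an interval. -/
lemma fiber_stepMap (ha : Monotone a) (h0 : a 0 = 0) (ht : a t = 1) (ht1 : 1 ≤ t)
    {l : ℕ} (hl : l < t) :
    (Finset.range N).filter (fun x => stepMap a t N x = l)
      = Finset.Ico (gfl a N l) (gfl a N (l+1)) := by
  have hcast : ∀ m : ℕ, ((gfl a N m : ℤ)) = ⌊a m * N⌋ := gfl_cast ha h0
  ext x
  simp only [Finset.mem_filter, Finset.mem_range, Finset.mem_Ico]
  constructor
  · rintro ⟨hxN, hstep⟩
    have hxt : (x : ℤ) < ⌊a t * N⌋ := by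
      rw [ht, one_mul]
      norm_num
      exact hxN
    obtain ⟨hs1, hs2⟩ := stepMap_spec ha h0 ht1 hxt
    rw [hstep] at hs1 hs2
    constructor
    · have := (hcast l) ▸ hs1
      omega
    · have := (hcast (l+1)) ▸ hs2
      omega
  · rintro ⟨h1, h2⟩
    have hgt : gfl a N (l+1) ≤ N := by
      have := gfl_mono ha h0 (N := N) (Nat.succ_le_of_lt hl)
      rw [gfl_top ht] at this
      exact this
    have hxN : x < N := by omega
    refine ⟨hxN, ?_⟩
    apply stepMap_eq ha hl
    · rw [← hcast l]; exact_mod_cast h1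
    · rw [← hcast (l+1)]; exact_mod_cast h2

lemma card_fiber_stepMap (ha : Monotone a) (h0 : a 0 = 0) (ht : a t = 1) (ht1 : 1 ≤ t)
    {l : ℕ} (hl : l < t) :
    ((Finset.range N).filter (fun x => stepMap a t N x = l)).card
      = gfl a N (l+1) - gfl a N l := by
  rw [fiber_stepMap ha h0 ht ht1 hl, Nat.card_Ico]

end gfl

/-- Cumulative sums of a weight function. -/
noncomputable def cumul (w : ℕ → ℝ) (i : ℕ) : ℝ := ∑ j ∈ Finset.range i, w j

lemma cumul_monotone {w : ℕ → ℝ} (hw : ∀ j, 0 ≤ w j) : Monotone (cumul w) := by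
  intro i1 i2 h
  apply Finset.sum_le_sum_of_subset_of_nonneg (Finset.range_subset_range.2 h)
  intro j _ _
  exact hw j

lemma cumul_zero (w : ℕ → ℝ) : cumul w 0 = 0 := by simp [cumul]

/-- The canonical blowup sequence. -/
noncomputable def blowSeq (F : RGraph r) (μ : ℕ → ℝ) (N : ℕ) : RGraph r :=
  liftG F (stepMap (cumul μ) F.n N) N

/-- The fiber sizes of the canonical blowup sequence. -/
noncomputable def mN (F : RGraph r) (μ : ℕ → ℝ) (N i : ℕ) : ℕ :=
  gfl (cumul μ) N (i+1) - gfl (cumul μ) N i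

section blowSeq

variable {F : RGraph r} {μ : ℕ → ℝ}

lemma weight_pos_n (hμ : IsWeight F μ) : 1 ≤ F.n := by
  rcases Nat.eq_zero_or_pos F.n with h | h
  · exfalso
    have h2 := hμ.2.2
    rw [h] at h2
    simp at h2
  · exact h

lemma cumul_mono_w (hμ : IsWeight F μ) : Monotone (cumul μ) := cumul_monotone hμ.1

lemma cumul_top_w (hμ : IsWeight F μ) : cumul μ F.n = 1 := hμ.2.2

lemma block_lt (hμ : IsWeight F μ) {N x : ℕ} (hx : x < N) :
    stepMap (cumul μ) F.n N x < F.n := by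
  apply stepMap_lt (weight_pos_n hμ)
  rw [cumul_top_w hμ, one_mul]
  norm_num
  exact hx

lemma isBlowupMap_blowSeq (hμ : IsWeight F μ) (N : ℕ) :
    IsBlowupMap F (blowSeq F μ N) (stepMap (cumul μ) F.n N) :=
  isBlowupMap_liftG F _ N (fun _ hx => block_lt hμ hx)

lemma card_fiber_block (hμ : IsWeight F μ) {N i : ℕ} (hi : i < F.n) :
    ((Finset.range N).filter (fun x => stepMap (cumul μ) F.n N x = i)).card
      = mN F μ N i :=
  card_fiber_stepMap (cumul_mono_w hμ) (cumul_zero μ) (cumul_top_w hμ) (weight_pos_n hμ) hi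

lemma sum_mN (hμ : IsWeight F μ) (N : ℕ) : ∑ i ∈ Finset.range F.n, mN F μ N i = N := by
  unfold mN
  rw [sum_range_sub_monotone (gfl_mono (cumul_mono_w hμ) (cumul_zero μ)),
    gfl_top (cumul_top_w hμ), gfl_zero (cumul_zero μ)]
  omega

lemma mN_cast (hμ : IsWeight F μ) (N i : ℕ) :
    (mN F μ N i : ℝ) = (gfl (cumul μ) N (i+1) : ℝ) - (gfl (cumul μ) N i : ℝ) := by
  unfold mN
  have := gfl_mono (N := N) (cumul_mono_w hμ) (cumul_zero μ) (Nat.le_succ i)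
  push_cast [Nat.cast_sub this]
  ring

lemma mN_le (hμ : IsWeight F μ) {N i : ℕ} :
    (mN F μ N i : ℝ) ≤ μ i * N + 1 := by
  rw [mN_cast hμ]
  have h1 := gfl_le_real (N := N) (cumul_mono_w hμ) (cumul_zero μ) (i+1)
  have h2 := real_lt_gfl (N := N) (cumul_mono_w hμ) (cumul_zero μ) i
  have : cumul μ (i+1) - cumul μ i = μ i := by
    unfold cumul
    rw [Finset.sum_range_succ]
    ring
  nlinarith [h1, h2]

lemma le_mN (hμ : IsWeight F μ) {N i : ℕ} :
    μ i * N - 1 ≤ (mN F μ N i : ℝ) := by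
  rw [mN_cast hμ]
  have h1 := real_lt_gfl (N := N) (cumul_mono_w hμ) (cumul_zero μ) (i+1)
  have h2 := gfl_le_real (N := N) (cumul_mono_w hμ) (cumul_zero μ) i
  have : cumul μ (i+1) - cumul μ i = μ i := by
    unfold cumul
    rw [Finset.sum_range_succ]
    ring
  nlinarith [h1, h2]

lemma card_edges_blowSeq (hμ : IsWeight F μ) (N : ℕ) :
    (blowSeq F μ N).edges.card = ∑ E ∈ F.edges, ∏ i ∈ E, mN F μ N i := by
  have h1 : (blowSeq F μ N).edges = lift r N (stepMap (cumul μ) F.n N) F.edges := rfl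
  rw [h1, card_lift F.uniform]
  apply Finset.sum_congr rfl
  intro E hE
  apply Finset.prod_congr rfl
  intro i hi
  exact card_fiber_block hμ (F.valid E hE i hi)

end blowSeq

section density

variable {F : RGraph r} {μ : ℕ → ℝ}

lemma tendsto_mN_div (hμ : IsWeight F μ) (i : ℕ) :
    Filter.Tendsto (fun N : ℕ => (mN F μ N i : ℝ) / N) atTop (nhds (μ i)) := by
  have h0 : Filter.Tendsto (fun N : ℕ => (mN F μ N i : ℝ) / N - μ i) atTop (nhds 0) := by
    apply squeeze_zero_norm' (a := fun N : ℕ => 1 / (N : ℝ))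
    · filter_upwards [eventually_ge_atTop 1] with N hN
      have hNpos : (0:ℝ) < N := by exact_mod_cast Nat.lt_of_lt_of_le Nat.zero_lt_one hN
      have key : |(mN F μ N i : ℝ) - μ i * N| ≤ 1 := by
        rw [abs_le]
        exact ⟨by linarith [le_mN hμ (N := N) (i := i)], by linarith [mN_le hμ (N := N) (i := i)]⟩
      have heq : (mN F μ N i : ℝ) / N - μ i = ((mN F μ N i : ℝ) - μ i * N) / N := by
        field_simp
      rw [Real.norm_eq_abs, heq, abs_div, abs_of_pos hNpos]
      gcongr
    · exact tendsto_one_div_atTop_nhds_zero_nat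
  have h1 := h0.add (tendsto_const_nhds (x := μ i) (f := atTop))
  rw [zero_add] at h1
  apply h1.congr
  intro N
  ring

lemma tendsto_density (hμ : IsWeight F μ) :
    Filter.Tendsto (fun N : ℕ => ((blowSeq F μ N).edges.card : ℝ) / (N : ℝ) ^ r) atTop
      (nhds (lamW F μ)) := by
  have hmain : Filter.Tendsto (fun N : ℕ => ∑ E ∈ F.edges, ∏ i ∈ E, ((mN F μ N i : ℝ) / N))
      atTop (nhds (lamW F μ)) := by
    unfold lamW
    apply tendsto_finset_sum
    intro E _
    apply tendsto_finset_prod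
    intro i _
    exact tendsto_mN_div hμ i
  apply hmain.congr'
  filter_upwards [eventually_ge_atTop 1] with N hN
  rw [card_edges_blowSeq hμ N]
  push_cast
  rw [Finset.sum_div]
  apply Finset.sum_congr rfl
  intro E hE
  rw [Finset.prod_div_distrib, Finset.prod_const, F.uniform E hE]

end density

section refine

variable (φ1 : ℕ → ℕ) (n' : ℕ) (ν' : ℕ → ℝ)

/-- Key reindexing: sort vertices by their `φ1`-fiber. -/
def Kmap (v : ℕ) : ℕ := φ1 v * n' + v

/-- Cumulative distribution of `ν'` in the order given by `Kmap`. -/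
noncomputable def Acum (p : ℕ) : ℝ :=
  ∑ v ∈ (Finset.range n').filter fun v => Kmap φ1 n' v < p, ν' v

variable {φ1 n' ν'}

lemma Kmap_mod {v : ℕ} (hv : v < n') : Kmap φ1 n' v % n' = v := by
  unfold Kmap
  rw [Nat.mul_add_mod', Nat.mod_eq_of_lt hv]

lemma Acum_mono (hν : ∀ v, 0 ≤ ν' v) : Monotone (Acum φ1 n' ν') := by
  intro p q hpq
  apply Finset.sum_le_sum_of_subset_of_nonneg
  · intro v hv
    rw [Finset.mem_filter] at hv ⊢
    exact ⟨hv.1, by omega⟩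
  · intro v _ _
    exact hν v

lemma Acum_zero : Acum φ1 n' ν' 0 = 0 := by
  unfold Acum
  rw [Finset.filter_false_of_mem (fun v _ => by omega), Finset.sum_empty]

lemma Acum_succ_sub (p : ℕ) :
    Acum φ1 n' ν' (p+1) - Acum φ1 n' ν' p
      = ∑ v ∈ (Finset.range n').filter fun v => Kmap φ1 n' v = p, ν' v := by
  unfold Acum
  have hsplit : ((Finset.range n').filter fun v => Kmap φ1 n' v < p + 1)
      = ((Finset.range n').filter fun v => Kmap φ1 n' v < p)
        ∪ ((Finset.range n').filter fun v => Kmap φ1 n' v = p) := by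
    rw [← Finset.filter_or]
    apply Finset.filter_congr
    intro v _
    constructor
    · intro h; omega
    · intro h; omega
  rw [hsplit, Finset.sum_union]
  · ring
  · rw [Finset.disjoint_left]
    intro v hv1 hv2
    rw [Finset.mem_filter] at hv1 hv2
    omega

variable {μ : ℕ → ℝ} {s : ℕ}

lemma Acum_top (hsum : ∑ v ∈ Finset.range n', ν' v = 1) (hφ : ∀ v < n', φ1 v < s) :
    Acum φ1 n' ν' (s * n') = 1 := by
  unfold Acum
  rw [Finset.filter_true_of_mem, hsum]
  intro v hv
  rw [Finset.mem_range] at hv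
  have := hφ v hv
  unfold Kmap
  calc φ1 v * n' + v < φ1 v * n' + n' := by omega
    _ = (φ1 v + 1) * n' := by ring
    _ ≤ s * n' := Nat.mul_le_mul_right n' (by omega)

lemma regroup (hν0 : ∀ v, 0 ≤ ν' v) (hφ : ∀ v < n', φ1 v < s)
    (hfib : ∀ i < s, μ i = ∑ v ∈ (Finset.range n').filter fun v => φ1 v = i, ν' v)
    {i : ℕ} (hi : i ≤ s) :
    ∑ w ∈ (Finset.range n').filter (fun w => φ1 w < i), ν' w = cumul μ i := by
  rw [cumul]
  rw [← Finset.sum_fiberwise_of_maps_to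
    (g := φ1) (t := Finset.range i)
    (fun w hw => Finset.mem_range.2 (Finset.mem_filter.1 hw).2) ν']
  apply Finset.sum_congr rfl
  intro j hj
  rw [Finset.mem_range] at hj
  rw [hfib j (by omega), Finset.filter_filter]
  have hset : (Finset.range n').filter (fun a => φ1 a < i ∧ φ1 a = j)
      = (Finset.range n').filter (fun a => φ1 a = j) := by
    apply Finset.filter_congr
    intro w _
    constructor
    · intro h; exact h.2
    · intro h; exact ⟨by omega, h⟩
  rw [hset]

lemma step_real (hν0 : ∀ v, 0 ≤ ν' v) (hsum : ∑ v ∈ Finset.range n', ν' v = 1)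
    (hφ : ∀ v < n', φ1 v < s) (hs : 1 ≤ s) (hn' : 1 ≤ n') {N x : ℕ} (hx : x < N) :
    ∃ v < n', stepMap (Acum φ1 n' ν') (s * n') N x = Kmap φ1 n' v := by
  have hmono := Acum_mono (φ1 := φ1) (n' := n') hν0
  have ht1 : 1 ≤ s * n' := Nat.one_le_iff_ne_zero.2 (by positivity)
  have hxi : (x : ℤ) < ⌊Acum φ1 n' ν' (s * n') * N⌋ := by
    rw [Acum_top hsum hφ, one_mul, Int.floor_natCast]
    exact_mod_cast hx
  obtain ⟨h1, h2⟩ := stepMap_spec hmono Acum_zero ht1 hxi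
  set p := stepMap (Acum φ1 n' ν') (s * n') N x with hp
  have hflt : (⌊Acum φ1 n' ν' p * N⌋ : ℤ) < ⌊Acum φ1 n' ν' (p+1) * N⌋ := by omega
  have hAlt : Acum φ1 n' ν' p < Acum φ1 n' ν' (p+1) := by
    by_contra hcon
    push_neg at hcon
    have : (⌊Acum φ1 n' ν' (p+1) * N⌋ : ℤ) ≤ ⌊Acum φ1 n' ν' p * N⌋ :=
      Int.floor_le_floor (mul_le_mul_of_nonneg_right hcon (Nat.cast_nonneg N))
    omega
  have hsumpos : ∑ v ∈ (Finset.range n').filter (fun v => Kmap φ1 n' v = p), ν' v ≠ 0 := by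
    have := Acum_succ_sub (φ1 := φ1) (n' := n') (ν' := ν') p
    intro hc
    rw [hc] at this
    linarith
  obtain ⟨v, hv⟩ := Finset.nonempty_of_sum_ne_zero hsumpos
  rw [Finset.mem_filter, Finset.mem_range] at hv
  exact ⟨v, hv.1, hv.2.symm⟩

/-- The refined block map. -/
noncomputable def betaMap (φ1 : ℕ → ℕ) (n' : ℕ) (ν' : ℕ → ℝ) (s N x : ℕ) : ℕ :=
  (stepMap (Acum φ1 n' ν') (s * n') N x) % n'

lemma betaMap_lt (hn' : 1 ≤ n') (s N x : ℕ) : betaMap φ1 n' ν' s N x < n' :=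
  Nat.mod_lt _ (by omega)

lemma beta_block (hμ0 : ∀ j, 0 ≤ μ j) (hν0 : ∀ v, 0 ≤ ν' v)
    (hsum : ∑ v ∈ Finset.range n', ν' v = 1) (hφ : ∀ v < n', φ1 v < s)
    (hfib : ∀ i < s, μ i = ∑ v ∈ (Finset.range n').filter fun v => φ1 v = i, ν' v)
    (hs : 1 ≤ s) (hn' : 1 ≤ n') {N x : ℕ} (hx : x < N) :
    φ1 (betaMap φ1 n' ν' s N x) = stepMap (cumul μ) s N x := by
  obtain ⟨v, hvn, hvp⟩ := step_real hν0 hsum hφ hs hn' hx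
  have hbeta : betaMap φ1 n' ν' s N x = v := by
    unfold betaMap
    rw [hvp, Kmap_mod hvn]
  rw [hbeta]
  have hmono := Acum_mono (φ1 := φ1) (n' := n') hν0
  have ht1 : 1 ≤ s * n' := Nat.one_le_iff_ne_zero.2 (by positivity)
  have hxi : (x : ℤ) < ⌊Acum φ1 n' ν' (s * n') * N⌋ := by
    rw [Acum_top hsum hφ, one_mul, Int.floor_natCast]
    exact_mod_cast hx
  obtain ⟨h1, h2⟩ := stepMap_spec hmono Acum_zero ht1 hxi
  rw [hvp] at h1 h2
  have his : φ1 v < s := hφ v hvn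
  have hlow : cumul μ (φ1 v) ≤ Acum φ1 n' ν' (Kmap φ1 n' v) := by
    rw [← regroup hν0 hφ hfib (le_of_lt his)]
    apply Finset.sum_le_sum_of_subset_of_nonneg
    · intro w hw
      rw [Finset.mem_filter] at hw ⊢
      refine ⟨hw.1, ?_⟩
      unfold Kmap
      have hwn := Finset.mem_range.1 hw.1
      calc φ1 w * n' + w < φ1 w * n' + n' := by omega
        _ = (φ1 w + 1) * n' := by ring
        _ ≤ φ1 v * n' := Nat.mul_le_mul_right n' (by omega)
        _ ≤ φ1 v * n' + v := by omega
    · intro w _ _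
      exact hν0 w
  have hhigh : Acum φ1 n' ν' (Kmap φ1 n' v + 1) ≤ cumul μ (φ1 v + 1) := by
    rw [← regroup hν0 hφ hfib (by omega : φ1 v + 1 ≤ s)]
    apply Finset.sum_le_sum_of_subset_of_nonneg
    · intro w hw
      rw [Finset.mem_filter] at hw ⊢
      refine ⟨hw.1, ?_⟩
      have hK := hw.2
      by_contra hcon
      push_neg at hcon
      have hge : Kmap φ1 n' v + 1 ≤ Kmap φ1 n' w := by
        unfold Kmap
        have hm1 : (φ1 v + 1) * n' ≤ φ1 w * n' := Nat.mul_le_mul_right n' hcon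
        have hm2 : (φ1 v + 1) * n' = φ1 v * n' + n' := by ring
        have hvlt : v < n' := hvn
        omega
      omega
    · intro w _ _
      exact hν0 w
  symm
  apply stepMap_eq (cumul_monotone hμ0) his
  · calc (⌊cumul μ (φ1 v) * N⌋ : ℤ) ≤ ⌊Acum φ1 n' ν' (Kmap φ1 n' v) * N⌋ :=
        Int.floor_le_floor (mul_le_mul_of_nonneg_right hlow (Nat.cast_nonneg N))
      _ ≤ (x : ℤ) := h1
  · calc (x : ℤ) < ⌊Acum φ1 n' ν' (Kmap φ1 n' v + 1) * N⌋ := h2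
      _ ≤ ⌊cumul μ (φ1 v + 1) * N⌋ :=
        Int.floor_le_floor (mul_le_mul_of_nonneg_right hhigh (Nat.cast_nonneg N))

lemma fiber_beta_le (hν0 : ∀ v, 0 ≤ ν' v) (hsum : ∑ v ∈ Finset.range n', ν' v = 1)
    (hφ : ∀ v < n', φ1 v < s) (hs : 1 ≤ s) (hn' : 1 ≤ n') {N v : ℕ} (hv : v < n') :
    (((Finset.range N).filter fun x => betaMap φ1 n' ν' s N x = v).card : ℝ)
      ≤ ν' v * N + 1 := by
  have hmono := Acum_mono (φ1 := φ1) (n' := n') hν0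
  have ht1 : 1 ≤ s * n' := Nat.one_le_iff_ne_zero.2 (by positivity)
  have hsubset : ((Finset.range N).filter fun x => betaMap φ1 n' ν' s N x = v)
      ⊆ Finset.Ico (gfl (Acum φ1 n' ν') N (Kmap φ1 n' v))
          (gfl (Acum φ1 n' ν') N (Kmap φ1 n' v + 1)) := by
    intro x hx
    rw [Finset.mem_filter, Finset.mem_range] at hx
    obtain ⟨hxN, hxv⟩ := hx
    obtain ⟨w, hwn, hwp⟩ := step_real hν0 hsum hφ hs hn' hxN
    have hwv : w = v := by
      unfold betaMap at hxv
      rw [hwp, Kmap_mod hwn] at hxv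
      exact hxv
    subst hwv
    have hxi : (x : ℤ) < ⌊Acum φ1 n' ν' (s * n') * N⌋ := by
      rw [Acum_top hsum hφ, one_mul, Int.floor_natCast]
      exact_mod_cast hxN
    obtain ⟨h1, h2⟩ := stepMap_spec hmono Acum_zero ht1 hxi
    rw [hwp] at h1 h2
    rw [Finset.mem_Ico]
    have hc1 := gfl_cast (N := N) hmono Acum_zero (Kmap φ1 n' w)
    have hc2 := gfl_cast (N := N) hmono Acum_zero (Kmap φ1 n' w + 1)
    omega
  have hcard := Finset.card_le_card hsubset
  rw [Nat.card_Ico] at hcard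
  have hgm := gfl_mono (N := N) hmono Acum_zero (Nat.le_succ (Kmap φ1 n' v))
  have hdiff : Acum φ1 n' ν' (Kmap φ1 n' v + 1) - Acum φ1 n' ν' (Kmap φ1 n' v) = ν' v := by
    rw [Acum_succ_sub]
    have : (Finset.range n').filter (fun w => Kmap φ1 n' w = Kmap φ1 n' v) = {v} := by
      ext w
      rw [Finset.mem_filter, Finset.mem_range, Finset.mem_singleton]
      constructor
      · rintro ⟨hwn, hK⟩
        have := Kmap_mod (φ1 := φ1) hwn
        rw [hK, Kmap_mod hv] at this
        omega
      · rintro rfl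
        exact ⟨hv, rfl⟩
    rw [this, Finset.sum_singleton]
  have hb1 := gfl_le_real (N := N) hmono Acum_zero (Kmap φ1 n' v + 1)
  have hb2 := real_lt_gfl (N := N) hmono Acum_zero (Kmap φ1 n' v)
  have hcast : ((gfl (Acum φ1 n' ν') N (Kmap φ1 n' v + 1) - gfl (Acum φ1 n' ν') N (Kmap φ1 n' v) : ℕ) : ℝ)
      = (gfl (Acum φ1 n' ν') N (Kmap φ1 n' v + 1) : ℝ) - (gfl (Acum φ1 n' ν') N (Kmap φ1 n' v) : ℝ) := by
    push_cast [Nat.cast_sub hgm]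
    ring
  calc (((Finset.range N).filter fun x => betaMap φ1 n' ν' s N x = v).card : ℝ)
      ≤ ((gfl (Acum φ1 n' ν') N (Kmap φ1 n' v + 1) - gfl (Acum φ1 n' ν') N (Kmap φ1 n' v) : ℕ) : ℝ) := by
        exact_mod_cast hcard
    _ = (gfl (Acum φ1 n' ν') N (Kmap φ1 n' v + 1) : ℝ) - (gfl (Acum φ1 n' ν') N (Kmap φ1 n' v) : ℝ) := hcast
    _ ≤ Acum φ1 n' ν' (Kmap φ1 n' v + 1) * N - (Acum φ1 n' ν' (Kmap φ1 n' v) * N - 1) := by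
        linarith
    _ = (Acum φ1 n' ν' (Kmap φ1 n' v + 1) - Acum φ1 n' ν' (Kmap φ1 n' v)) * N + 1 := by ring
    _ = ν' v * N + 1 := by rw [hdiff]

end refine

section plumbing

lemma Real_sInf_nonneg' {S : Set ℝ} (h : ∀ x ∈ S, 0 ≤ x) : 0 ≤ sInf S :=
  Real.sInf_nonneg h

lemma distFam_bddBelow (𝔥 : Set (RGraph r)) (G : RGraph r) :
    BddBelow {x : ℝ | ∃ H ∈ 𝔥, H.n = G.n ∧ x = ((symmDiff G.edges H.edges).card : ℝ)} := by
  refine ⟨0, fun x hx => ?_⟩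
  obtain ⟨H, _, _, rfl⟩ := hx
  positivity

lemma distFam_le {𝔥 : Set (RGraph r)} {G H : RGraph r} (hH : H ∈ 𝔥) (hn : H.n = G.n) :
    distFam 𝔥 G ≤ ((symmDiff G.edges H.edges).card : ℝ) :=
  csInf_le (distFam_bddBelow 𝔥 G) ⟨H, hH, hn, rfl⟩

lemma distFam_nonneg (𝔥 : Set (RGraph r)) (G : RGraph r) : 0 ≤ distFam 𝔥 G := by
  apply Real_sInf_nonneg'
  rintro x ⟨H, _, _, rfl⟩
  positivity

lemma edges_subset_powersetCard (G : RGraph r) :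
    G.edges ⊆ (Finset.range G.n).powersetCard r := by
  intro e he
  rw [Finset.mem_powersetCard]
  exact ⟨fun v hv => Finset.mem_range.2 (G.valid e he v hv), G.uniform e he⟩

lemma symm_card_le (G H : RGraph r) (hn : H.n = G.n) :
    (symmDiff G.edges H.edges).card ≤ G.n ^ r := by
  have hsub : symmDiff G.edges H.edges ⊆ (Finset.range G.n).powersetCard r := by
    intro e he
    rw [Finset.mem_symmDiff] at he
    rcases he with ⟨h1, _⟩ | ⟨h1, _⟩
    · exact edges_subset_powersetCard G h1
    · have := edges_subset_powersetCard H h1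
      rw [hn] at this
      exact this
  calc (symmDiff G.edges H.edges).card ≤ ((Finset.range G.n).powersetCard r).card :=
      Finset.card_le_card hsub
    _ = (G.n).choose r := by rw [Finset.card_powersetCard, Finset.card_range]
    _ ≤ G.n ^ r := Nat.choose_le_pow G.n r

lemma dPrime_nonneg {E1 E2 : Finset (Finset ℕ)} {ν : ℕ → ℝ} (hν : ∀ v, 0 ≤ ν v) :
    0 ≤ dPrime E1 E2 ν := by
  apply Finset.sum_nonneg
  intro e _
  exact Finset.prod_nonneg fun v _ => hν v

lemma wDist_nonneg (F1 : RGraph r) (μ1 : ℕ → ℝ) (F2 : RGraph r) (μ2 : ℕ → ℝ) :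
    0 ≤ wDist F1 μ1 F2 μ2 := by
  apply Real_sInf_nonneg'
  rintro x ⟨G1, G2, ν, _, hB1, _, rfl⟩
  exact dPrime_nonneg hB1.1.1

lemma wDistFam_nonneg (𝔥 : Set (RGraph r)) (F : RGraph r) (μ : ℕ → ℝ) :
    0 ≤ wDistFam 𝔥 F μ := by
  apply Real_sInf_nonneg'
  rintro x ⟨H, _, ν, _, rfl⟩
  exact wDist_nonneg F μ H ν

lemma nu_le_one {G : RGraph r} {ν : ℕ → ℝ} (hν : IsWeight G ν) {v : ℕ} (hv : v < G.n) :
    ν v ≤ 1 := by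
  have := Finset.single_le_sum (f := ν) (fun i _ => hν.1 i) (Finset.mem_range.2 hv)
  rw [hν.2.2] at this
  exact this

end plumbing

section upper

lemma upper_aux {F : RGraph r} {μ : ℕ → ℝ} (hμ : IsWeight F μ)
    {𝔥 : Set (RGraph r)} (hcl : Clonable 𝔥)
    {H : RGraph r} (hH : H ∈ 𝔥) {ν : ℕ → ℝ}
    {G1 G2 : RGraph r} {ν' : ℕ → ℝ} (hn12 : G1.n = G2.n)
    (hW1 : WIsBlowup F μ G1 ν') (hW2 : WIsBlowup H ν G2 ν') (N : ℕ) :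
    ∃ HN, HN ∈ 𝔥 ∧ HN.n = N ∧
      ((symmDiff (blowSeq F μ N).edges HN.edges).card : ℝ)
        ≤ dPrime G1.edges G2.edges ν' * (N : ℝ) ^ r
          + ((symmDiff G1.edges G2.edges).card : ℝ) * r * ((N : ℝ) + 1) ^ (r - 1) := by
  obtain ⟨hwt1, φ1, hφ1, hfib1⟩ := hW1
  obtain ⟨hwt2, φ2, hφ2, hfib2⟩ := hW2
  have hs : 1 ≤ F.n := weight_pos_n hμ
  have hn' : 1 ≤ G1.n := weight_pos_n hwt1
  have hν'0 : ∀ v, 0 ≤ ν' v := hwt1.1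
  have hsum : ∑ v ∈ Finset.range G1.n, ν' v = 1 := hwt1.2.2
  set β : ℕ → ℕ := betaMap φ1 G1.n ν' F.n N with hβ
  have hβlt : ∀ x, β x < G1.n := fun x => betaMap_lt hn' F.n N x
  have hββ : ∀ x < N, φ1 (β x) = stepMap (cumul μ) F.n N x := fun x hx =>
    beta_block hμ.1 hν'0 hsum hφ1.1 hfib1 hs hn' hx
  -- the companion blowup of H
  set HN : RGraph r := liftG H (fun x => φ2 (β x)) N with hHN
  have hHNmap : IsBlowupMap H HN fun x => φ2 (β x) := by
    apply isBlowupMap_liftG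
    intro x _
    apply hφ2.1
    rw [← hn12]
    exact hβlt x
  have hHNmem : HN ∈ 𝔥 := hcl H hH HN ⟨_, hHNmap⟩
  have he1 : (blowSeq F μ N).edges = lift r N β G1.edges := by
    have step1 : (blowSeq F μ N).edges = lift r N (stepMap (cumul μ) F.n N) F.edges := rfl
    have step2 : lift r N (stepMap (cumul μ) F.n N) F.edges
        = lift r N (fun x => φ1 (β x)) F.edges :=
      lift_congr F.edges fun v hv => (hββ v hv).symm
    have step3 : lift r N (fun x => φ1 (β x)) F.edges = lift r N β G1.edges :=
      lift_comp hφ1 fun v _ => hβlt v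
    rw [step1, step2, step3]
  have he2 : HN.edges = lift r N β G2.edges := by
    have step1 : HN.edges = lift r N (fun x => φ2 (β x)) H.edges := rfl
    have step3 : lift r N (fun x => φ2 (β x)) H.edges = lift r N β G2.edges :=
      lift_comp hφ2 fun v _ => hn12 ▸ hβlt v
    rw [step1, step3]
  have hsymuni : ∀ S ∈ symmDiff G1.edges G2.edges, S.card = r := by
    intro S hS
    rw [Finset.mem_symmDiff] at hS
    rcases hS with ⟨h1, _⟩ | ⟨h1, _⟩
    · exact G1.uniform S h1
    · exact G2.uniform S h1
  have hsymvalid : ∀ S ∈ symmDiff G1.edges G2.edges, ∀ v ∈ S, v < G1.n := by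
    intro S hS v hv
    rw [Finset.mem_symmDiff] at hS
    rcases hS with ⟨h1, _⟩ | ⟨h1, _⟩
    · exact G1.valid S h1 v hv
    · rw [hn12]; exact G2.valid S h1 v hv
  have hkey : symmDiff (blowSeq F μ N).edges HN.edges
      = lift r N β (symmDiff G1.edges G2.edges) := by
    rw [he1, he2, lift_symmDiff]
  have hcard : (symmDiff (blowSeq F μ N).edges HN.edges).card
      = ∑ S ∈ symmDiff G1.edges G2.edges,
          ∏ v ∈ S, ((Finset.range N).filter fun x => β x = v).card := by
    rw [hkey, card_lift hsymuni]
  refine ⟨HN, hHNmem, rfl, ?_⟩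
  rw [hcard]
  push_cast
  have hbound : ∀ S ∈ symmDiff G1.edges G2.edges,
      (∏ v ∈ S, (((Finset.range N).filter fun x => β x = v).card : ℝ))
        ≤ (∏ v ∈ S, ν' v) * (N : ℝ) ^ r + (r : ℝ) * ((N : ℝ) + 1) ^ (r - 1) := by
    intro S hS
    have hcardS := hsymuni S hS
    have h1 : ∀ v ∈ S, (((Finset.range N).filter fun x => β x = v).card : ℝ) ≤ ν' v * N + 1 :=
      fun v hv => fiber_beta_le hν'0 hsum hφ1.1 hs hn' (hsymvalid S hS v hv)
    have h2 : ∏ v ∈ S, (((Finset.range N).filter fun x => β x = v).card : ℝ)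
        ≤ ∏ v ∈ S, (ν' v * N + 1) := by
      apply Finset.prod_le_prod
      · intro v _; positivity
      · exact h1
    have h3 : ∏ v ∈ S, (ν' v * N + 1)
        ≤ ∏ v ∈ S, (ν' v * N) + S.card * ((N : ℝ) + 1) ^ (S.card - 1) := by
      apply prod_expand
      intro v hv
      have hle1 : ν' v ≤ 1 := nu_le_one hwt1 (hsymvalid S hS v hv)
      constructor
      · exact mul_nonneg (hν'0 v) (Nat.cast_nonneg N)
      · nlinarith [Nat.cast_nonneg (α := ℝ) N, hν'0 v]
    have h4 : ∏ v ∈ S, (ν' v * N) = (∏ v ∈ S, ν' v) * (N : ℝ) ^ r := by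
      rw [Finset.prod_mul_distrib, Finset.prod_const, hcardS]
    calc ∏ v ∈ S, (((Finset.range N).filter fun x => β x = v).card : ℝ)
        ≤ ∏ v ∈ S, (ν' v * N + 1) := h2
      _ ≤ ∏ v ∈ S, (ν' v * N) + S.card * ((N : ℝ) + 1) ^ (S.card - 1) := h3
      _ = (∏ v ∈ S, ν' v) * (N : ℝ) ^ r + (r : ℝ) * ((N : ℝ) + 1) ^ (r - 1) := by
          rw [h4, hcardS]
  calc ∑ S ∈ symmDiff G1.edges G2.edges,
        (∏ v ∈ S, (((Finset.range N).filter fun x => β x = v).card : ℝ))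
      ≤ ∑ S ∈ symmDiff G1.edges G2.edges,
          ((∏ v ∈ S, ν' v) * (N : ℝ) ^ r + (r : ℝ) * ((N : ℝ) + 1) ^ (r - 1)) :=
        Finset.sum_le_sum hbound
    _ = dPrime G1.edges G2.edges ν' * (N : ℝ) ^ r
        + ((symmDiff G1.edges G2.edges).card : ℝ) * r * ((N : ℝ) + 1) ^ (r - 1) := by
        rw [Finset.sum_add_distrib, ← Finset.sum_mul, Finset.sum_const, nsmul_eq_mul]
        unfold dPrime
        ring

end upper

section lower

lemma exists_family_member {𝔥 : Set (RGraph r)} (hcl : Clonable 𝔥) {H0 : RGraph r}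
    (hH0 : H0 ∈ 𝔥) (h1 : 1 ≤ H0.n) (N : ℕ) : ∃ H', H' ∈ 𝔥 ∧ H'.n = N :=
  ⟨liftG H0 (fun _ => 0) N,
    hcl H0 hH0 _ ⟨_, isBlowupMap_liftG H0 (fun _ => 0) N (fun _ _ => h1)⟩, rfl⟩

lemma isBlowupMap_id (G : RGraph r) : IsBlowupMap G G id := by
  refine ⟨fun v hv => hv, fun e => ?_⟩
  constructor
  · intro he
    refine ⟨G.valid e he, fun a _ b _ h => h, ?_⟩
    rwa [Finset.image_id]
  · rintro ⟨_, _, h⟩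
    rwa [Finset.image_id] at h

lemma lower_aux {F : RGraph r} {μ : ℕ → ℝ} (hμ : IsWeight F μ)
    {𝔥 : Set (RGraph r)} {N : ℕ} (H' : RGraph r) (hH' : H' ∈ 𝔥) (hn : H'.n = N)
    {ε' : ℝ} (hε : 0 < ε') (hN1 : 1 ≤ N)
    (hbig : ∀ i < F.n, 0 < μ i → 1 + ε' ≤ μ i * N * ε') :
    wDistFam 𝔥 F μ ≤ ((symmDiff (blowSeq F μ N).edges H'.edges).card : ℝ)
      * ((1 + ε') / N) ^ r := by
  have hNpos : (0:ℝ) < N := by exact_mod_cast hN1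
  set bl : ℕ → ℕ := stepMap (cumul μ) F.n N with hbl
  set νN : ℕ → ℝ := fun x => if x < N then μ (bl x) / (mN F μ N (bl x)) else 0 with hνN
  have hνN0 : ∀ x, 0 ≤ νN x := by
    intro x
    rw [hνN]
    dsimp only
    split_ifs
    · exact div_nonneg (hμ.1 _) (Nat.cast_nonneg _)
    · exact le_refl 0
  -- positive fibers
  have hmpos : ∀ i < F.n, 0 < μ i → (0:ℝ) < (mN F μ N i : ℝ) := by
    intro i hi hpos
    have hb := hbig i hi hpos
    have h1 := le_mN hμ (N := N) (i := i)
    nlinarith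
  have hA : ∀ i < F.n, (mN F μ N i : ℝ) * (μ i / (mN F μ N i)) = μ i := by
    intro i hi
    rcases eq_or_lt_of_le (hμ.1 i) with h | h
    · rw [← h]
      simp
    · have := hmpos i hi h
      field_simp
  -- fiber sums
  have hfibsum : ∀ i < F.n,
      ∑ x ∈ (Finset.range N).filter (fun x => bl x = i), νN x = μ i := by
    intro i hi
    have hconst : ∀ x ∈ (Finset.range N).filter (fun x => bl x = i),
        νN x = μ i / (mN F μ N i) := by
      intro x hx
      rw [Finset.mem_filter, Finset.mem_range] at hx
      rw [hνN]
      dsimp only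
      rw [if_pos hx.1, hx.2]
    rw [Finset.sum_congr rfl hconst, Finset.sum_const, card_fiber_block hμ hi,
      nsmul_eq_mul, hA i hi]
  have htotal : ∑ x ∈ Finset.range N, νN x = 1 := by
    rw [← Finset.sum_fiberwise_of_maps_to (g := bl) (t := Finset.range F.n)
      (fun x hx => Finset.mem_range.2 (block_lt hμ (Finset.mem_range.1 hx))) νN]
    rw [← hμ.2.2]
    apply Finset.sum_congr rfl
    intro i hi
    exact hfibsum i (Finset.mem_range.1 hi)
  have hwt1 : IsWeight (blowSeq F μ N) νN := by
    refine ⟨hνN0, ?_, htotal⟩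
    intro v hv
    rw [hνN]
    dsimp only
    rw [if_neg (by exact Nat.not_lt.2 hv)]
  have hwt2 : IsWeight H' νN := by
    rw [IsWeight, hn]
    exact ⟨hνN0, hwt1.2.1, htotal⟩
  have hWB1 : WIsBlowup F μ (blowSeq F μ N) νN := by
    refine ⟨hwt1, bl, isBlowupMap_blowSeq hμ N, ?_⟩
    intro i hi
    exact (hfibsum i hi).symm
  have hWB2 : WIsBlowup H' νN H' νN := by
    refine ⟨hwt2, id, isBlowupMap_id H', ?_⟩
    intro i hi
    have : (Finset.range H'.n).filter (fun v => id v = i) = {i} := by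
      ext w
      simp only [Finset.mem_filter, Finset.mem_range, Finset.mem_singleton, id]
      constructor
      · rintro ⟨_, rfl⟩; rfl
      · rintro rfl; exact ⟨hi, rfl⟩
    rw [this, Finset.sum_singleton]
  -- the bound on νN
  have hbound : ∀ x, νN x ≤ (1 + ε') / N := by
    intro x
    rw [hνN]
    dsimp only
    split_ifs with hx
    · have hblt : bl x < F.n := block_lt hμ hx
      rcases eq_or_lt_of_le (hμ.1 (bl x)) with h | h
      · rw [← h]
        simp
        positivity
      · have hmp := hmpos _ hblt h
        rw [div_le_div_iff₀ hmp hNpos]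
        have h1 := le_mN hμ (N := N) (i := bl x)
        have hb := hbig _ hblt h
        nlinarith
    · positivity
  -- distances
  have hd1 : wDistFam 𝔥 F μ ≤ wDist F μ H' νN := by
    apply csInf_le
    · refine ⟨0, fun x hx => ?_⟩
      obtain ⟨H'', _, ν'', _, rfl⟩ := hx
      exact wDist_nonneg F μ H'' ν''
    · exact ⟨H', hH', νN, hwt2, rfl⟩
  have hd2 : wDist F μ H' νN ≤ dPrime (blowSeq F μ N).edges H'.edges νN := by
    apply csInf_le
    · refine ⟨0, fun x hx => ?_⟩
      obtain ⟨GG1, GG2, ν'', _, hB1, _, rfl⟩ := hx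
      exact dPrime_nonneg hB1.1.1
    · exact ⟨blowSeq F μ N, H', νN, hn.symm, hWB1, hWB2, rfl⟩
  have hd3 : dPrime (blowSeq F μ N).edges H'.edges νN
      ≤ ((symmDiff (blowSeq F μ N).edges H'.edges).card : ℝ) * ((1 + ε') / N) ^ r := by
    unfold dPrime
    have hsymuni : ∀ e ∈ symmDiff (blowSeq F μ N).edges H'.edges, e.card = r := by
      intro e he
      rw [Finset.mem_symmDiff] at he
      rcases he with ⟨h1, _⟩ | ⟨h1, _⟩
      · exact (blowSeq F μ N).uniform e h1
      · exact H'.uniform e h1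
    calc ∑ e ∈ symmDiff (blowSeq F μ N).edges H'.edges, ∏ v ∈ e, νN v
        ≤ ∑ e ∈ symmDiff (blowSeq F μ N).edges H'.edges, ((1 + ε') / N) ^ r := by
          apply Finset.sum_le_sum
          intro e he
          calc ∏ v ∈ e, νN v ≤ ∏ v ∈ e, ((1 + ε') / N) :=
              Finset.prod_le_prod (fun v _ => hνN0 v) (fun v _ => hbound v)
            _ = ((1 + ε') / N) ^ e.card := Finset.prod_const _
            _ = ((1 + ε') / N) ^ r := by rw [hsymuni e he]
      _ = ((symmDiff (blowSeq F μ N).edges H'.edges).card : ℝ) * ((1 + ε') / N) ^ r := by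
          rw [Finset.sum_const, nsmul_eq_mul]
  linarith

end lower

section product

lemma div_key {b : ℕ} (hb : 0 < b) (i : ℕ) {j : ℕ} (hj : j < b) : (i * b + j) / b = i := by
  rw [mul_comm, Nat.mul_add_div hb, Nat.div_eq_of_lt hj]
  omega

lemma mod_key {b : ℕ} (i : ℕ) {j : ℕ} (hj : j < b) : (i * b + j) % b = j := by
  rw [Nat.mul_add_mod', Nat.mod_eq_of_lt hj]

lemma divmod_key (b p : ℕ) : p / b * b + p % b = p := Nat.div_add_mod' p b

lemma sum_fiber_div {a b : ℕ} (hb : 0 < b) {i : ℕ} (hi : i < a) (w : ℕ → ℝ) :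
    ∑ p ∈ (Finset.range (a * b)).filter (fun p => p / b = i), w p
      = ∑ j ∈ Finset.range b, w (i * b + j) := by
  apply Finset.sum_nbij' (i := fun p => p % b) (j := fun j => i * b + j)
  · intro p hp
    rw [Finset.mem_filter] at hp
    exact Finset.mem_range.2 (Nat.mod_lt p hb)
  · intro j hj
    rw [Finset.mem_range] at hj
    rw [Finset.mem_filter, Finset.mem_range]
    constructor
    · calc i * b + j < i * b + b := by omega
        _ = (i + 1) * b := by ring
        _ ≤ a * b := Nat.mul_le_mul_right b (by omega)
    · exact div_key hb i hj
  · intro p hp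
    rw [Finset.mem_filter] at hp
    rw [← hp.2]
    exact divmod_key b p
  · intro j hj
    rw [Finset.mem_range] at hj
    exact mod_key i hj
  · intro p hp
    rw [Finset.mem_filter] at hp
    rw [← hp.2, divmod_key b p]

lemma sum_fiber_mod {a b : ℕ} (hb : 0 < b) {j : ℕ} (hj : j < b) (w : ℕ → ℝ) :
    ∑ p ∈ (Finset.range (a * b)).filter (fun p => p % b = j), w p
      = ∑ i ∈ Finset.range a, w (i * b + j) := by
  apply Finset.sum_nbij' (i := fun p => p / b) (j := fun i => i * b + j)
  · intro p hp
    rw [Finset.mem_filter, Finset.mem_range] at hp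
    rw [Finset.mem_range]
    exact Nat.div_lt_of_lt_mul (by rw [mul_comm]; exact hp.1)
  · intro i hi
    rw [Finset.mem_range] at hi
    rw [Finset.mem_filter, Finset.mem_range]
    constructor
    · calc i * b + j < i * b + b := by omega
        _ = (i + 1) * b := by ring
        _ ≤ a * b := Nat.mul_le_mul_right b (by omega)
    · exact mod_key i hj
  · intro p hp
    rw [Finset.mem_filter] at hp
    rw [← hp.2, divmod_key b p]
  · intro i hi
    rw [Finset.mem_range] at hi
    exact div_key hb i hj
  · intro p hp
    rw [Finset.mem_filter] at hp
    rw [← hp.2, divmod_key b p]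

lemma product_blowup {F H : RGraph r} {μ ν : ℕ → ℝ} (hμ : IsWeight F μ) (hν : IsWeight H ν) :
    ∃ (G1 G2 : RGraph r) (ν'' : ℕ → ℝ), G1.n = G2.n ∧
      WIsBlowup F μ G1 ν'' ∧ WIsBlowup H ν G2 ν'' := by
  have ha : 1 ≤ F.n := weight_pos_n hμ
  have hb : 1 ≤ H.n := weight_pos_n hν
  set a := F.n
  set b := H.n
  set NN := a * b with hNN
  set β1 : ℕ → ℕ := fun p => p / b with hβ1
  set β2 : ℕ → ℕ := fun p => p % b with hβ2
  set ν'' : ℕ → ℝ := fun p => if p < NN then μ (p / b) * ν (p % b) else 0 with hν''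
  have hν''0 : ∀ p, 0 ≤ ν'' p := by
    intro p
    rw [hν'']
    dsimp only
    split_ifs
    · exact mul_nonneg (hμ.1 _) (hν.1 _)
    · exact le_refl 0
  set G1 := liftG F β1 NN with hG1
  set G2 := liftG H β2 NN with hG2
  have hmap1 : IsBlowupMap F G1 β1 :=
    isBlowupMap_liftG F β1 NN (fun p hp => Nat.div_lt_of_lt_mul (by
      rw [hNN, mul_comm] at hp
      exact hp))
  have hmap2 : IsBlowupMap H G2 β2 :=
    isBlowupMap_liftG H β2 NN (fun p _ => Nat.mod_lt p (by omega))
  have hfib1 : ∀ i < a, μ i = ∑ p ∈ (Finset.range NN).filter (fun p => β1 p = i), ν'' p := by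
    intro i hi
    rw [hNN]
    rw [sum_fiber_div (by omega) hi ν'']
    have : ∀ j ∈ Finset.range b, ν'' (i * b + j) = μ i * ν j := by
      intro j hj
      rw [Finset.mem_range] at hj
      rw [hν'']
      dsimp only
      have hlt : i * b + j < NN := by
        calc i * b + j < i * b + b := by omega
          _ = (i + 1) * b := by ring
          _ ≤ a * b := Nat.mul_le_mul_right b (by omega)
      rw [if_pos hlt, div_key (by omega) i hj, mod_key i hj]
    rw [Finset.sum_congr rfl this, ← Finset.mul_sum, hν.2.2, mul_one]
  have hfib2 : ∀ j < b, ν j = ∑ p ∈ (Finset.range NN).filter (fun p => β2 p = j), ν'' p := by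
    intro j hj
    rw [hNN]
    rw [sum_fiber_mod (by omega) hj ν'']
    have : ∀ i ∈ Finset.range a, ν'' (i * b + j) = μ i * ν j := by
      intro i hi
      rw [Finset.mem_range] at hi
      rw [hν'']
      dsimp only
      have hlt : i * b + j < NN := by
        calc i * b + j < i * b + b := by omega
          _ = (i + 1) * b := by ring
          _ ≤ a * b := Nat.mul_le_mul_right b (by omega)
      rw [if_pos hlt, div_key (by omega) i hj, mod_key i hj]
    rw [Finset.sum_congr rfl this, ← Finset.sum_mul, hμ.2.2, one_mul]
  have htotal : ∑ p ∈ Finset.range NN, ν'' p = 1 := by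
    rw [← Finset.sum_fiberwise_of_maps_to (g := β1) (t := Finset.range a)
      (fun p hp => Finset.mem_range.2 (Nat.div_lt_of_lt_mul (by
        rw [mul_comm]
        exact Finset.mem_range.1 hp))) ν'']
    rw [← hμ.2.2]
    apply Finset.sum_congr rfl
    intro i hi
    exact (hfib1 i (Finset.mem_range.1 hi)).symm
  have hwt : IsWeight G1 ν'' := by
    refine ⟨hν''0, ?_, htotal⟩
    intro p hp
    rw [hν'']
    dsimp only
    rw [if_neg (by exact Nat.not_lt.2 hp)]
  have hwt2 : IsWeight G2 ν'' := hwt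
  refine ⟨G1, G2, ν'', rfl, ⟨hwt, β1, hmap1, hfib1⟩, ⟨hwt2, β2, hmap2, hfib2⟩⟩

end product

section final

lemma isWeight_uniformW {G : RGraph r} (h : 1 ≤ G.n) : IsWeight G (uniformW G) := by
  refine ⟨?_, ?_, ?_⟩
  · intro v
    unfold uniformW
    split_ifs
    · positivity
    · exact le_refl 0
  · intro v hv
    unfold uniformW
    rw [if_neg (by omega)]
  · have hne : ((G.n : ℝ)) ≠ 0 := by
      have : (0:ℝ) < G.n := by exact_mod_cast h
      linarith
    have : ∀ v ∈ Finset.range G.n, uniformW G v = ((G.n : ℝ))⁻¹ := by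
      intro v hv
      unfold uniformW
      rw [if_pos (Finset.mem_range.1 hv)]
    rw [Finset.sum_congr rfl this, Finset.sum_const, Finset.card_range, nsmul_eq_mul,
      mul_inv_cancel₀ hne]

lemma error_term_small (M : ℝ) (hM : 0 ≤ M) {ε : ℝ} (hε : 0 < ε) (r : ℕ) :
    ∃ N1 : ℕ, 1 ≤ N1 ∧ ∀ N : ℕ, N1 ≤ N →
      M * r * ((N : ℝ) + 1) ^ (r - 1) ≤ ε * (N : ℝ) ^ r := by
  rcases Nat.eq_zero_or_pos r with hr | hr
  · refine ⟨1, le_refl 1, fun N hN => ?_⟩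
    rw [hr]
    push_cast
    rw [mul_zero, zero_mul, pow_zero]
    positivity
  · set C := M * r * 2 ^ (r - 1) with hC
    have hC0 : 0 ≤ C := by positivity
    obtain ⟨N0, hN0⟩ := exists_nat_gt (C / ε)
    refine ⟨max N0 1, le_max_right N0 1, fun N hN => ?_⟩
    have hN1 : 1 ≤ N := le_trans (le_max_right N0 1) hN
    have hNN0 : N0 ≤ N := le_trans (le_max_left N0 1) hN
    have hNpos : (0:ℝ) < N := by exact_mod_cast hN1
    have hN1r : (1:ℝ) ≤ (N : ℝ) := by exact_mod_cast hN1
    have h1 : ((N : ℝ) + 1) ^ (r - 1) ≤ (2 * N) ^ (r - 1) := by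
      apply pow_le_pow_left₀ (by positivity)
      linarith
    have h2 : M * r * ((N : ℝ) + 1) ^ (r - 1) ≤ C * (N : ℝ) ^ (r - 1) := by
      calc M * r * ((N : ℝ) + 1) ^ (r - 1) ≤ M * r * ((2 * (N:ℝ)) ^ (r-1)) := by
            apply mul_le_mul_of_nonneg_left h1 (by positivity)
        _ = C * (N : ℝ) ^ (r - 1) := by
            rw [hC, mul_pow]
            ring
    have h3 : C < ε * N := by
      have : C / ε < (N : ℝ) := lt_of_lt_of_le hN0 (by exact_mod_cast hNN0)
      rw [div_lt_iff₀ hε] at this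
      linarith
    have h4 : C * (N : ℝ) ^ (r - 1) ≤ ε * N * (N : ℝ) ^ (r - 1) := by
      apply mul_le_mul_of_nonneg_right (le_of_lt h3) (by positivity)
    have h5 : ε * (N:ℝ) * (N : ℝ) ^ (r - 1) = ε * (N : ℝ) ^ r := by
      have : (N:ℝ) * (N : ℝ) ^ (r - 1) = (N : ℝ) ^ r := by
        rw [← pow_succ']
        congr 1
        omega
      rw [mul_assoc, this]
    linarith

lemma distFam_le_pow {F : RGraph r} {μ : ℕ → ℝ} {𝔥 : Set (RGraph r)} (hcl : Clonable 𝔥)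
    {H0 : RGraph r} (hH0 : H0 ∈ 𝔥) (hH0n : 1 ≤ H0.n) (N : ℕ) :
    distFam 𝔥 (blowSeq F μ N) ≤ ((N : ℝ)) ^ r := by
  obtain ⟨H', hmem, hn⟩ := exists_family_member hcl hH0 hH0n N
  have h1 : distFam 𝔥 (blowSeq F μ N) ≤ ((symmDiff (blowSeq F μ N).edges H'.edges).card : ℝ) :=
    distFam_le hmem hn
  have h2 := symm_card_le (blowSeq F μ N) H' hn
  have h3 : ((symmDiff (blowSeq F μ N).edges H'.edges).card : ℝ) ≤ ((N:ℝ)) ^ r := by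
    have : ((symmDiff (blowSeq F μ N).edges H'.edges).card : ℝ) ≤ ((N ^ r : ℕ) : ℝ) := by
      exact_mod_cast h2
    rw [Nat.cast_pow] at this
    exact this
  linarith

set_option maxHeartbeats 1000000 in
lemma tendsto_dist (F : RGraph r) (μ : ℕ → ℝ) (hμ : IsWeight F μ)
    (𝔥 : Set (RGraph r)) (hcl : Clonable 𝔥) :
    Filter.Tendsto (fun N : ℕ => distFam 𝔥 (blowSeq F μ N) / (N : ℝ) ^ r) atTop
      (nhds (wDistFam 𝔥 F μ)) := by
  by_cases hex : ∃ H0 ∈ 𝔥, 1 ≤ H0.n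
  swap
  · -- degenerate case : no member admits a weight
    push_neg at hex
    have hD : wDistFam 𝔥 F μ = 0 := by
      unfold wDistFam
      have : {x : ℝ | ∃ H ∈ 𝔥, ∃ ν, IsWeight H ν ∧ x = wDist F μ H ν} = ∅ := by
        rw [Set.eq_empty_iff_forall_notMem]
        rintro x ⟨H, hH, ν, hν, _⟩
        exact absurd (weight_pos_n hν) (Nat.not_le.2 (hex H hH))
      rw [this, Real.sInf_empty]
    rw [hD]
    apply Filter.Tendsto.congr' _ tendsto_const_nhds
    filter_upwards [eventually_ge_atTop 1] with N hN
    have : distFam 𝔥 (blowSeq F μ N) = 0 := by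
      unfold distFam
      have : {x : ℝ | ∃ H ∈ 𝔥, H.n = (blowSeq F μ N).n ∧
          x = ((symmDiff (blowSeq F μ N).edges H.edges).card : ℝ)} = ∅ := by
        rw [Set.eq_empty_iff_forall_notMem]
        rintro x ⟨H, hH, hn, _⟩
        have hn' : H.n = N := hn
        have := hex H hH
        omega
      rw [this, Real.sInf_empty]
    rw [this, zero_div]
  obtain ⟨H0, hH0, hH0n⟩ := hex
  have hSw_ne : {x : ℝ | ∃ H ∈ 𝔥, ∃ ν, IsWeight H ν ∧ x = wDist F μ H ν}.Nonempty :=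
    ⟨wDist F μ H0 (uniformW H0), H0, hH0, uniformW H0, isWeight_uniformW hH0n, rfl⟩
  have hSw_bdd : BddBelow {x : ℝ | ∃ H ∈ 𝔥, ∃ ν, IsWeight H ν ∧ x = wDist F μ H ν} := by
    refine ⟨0, fun x hx => ?_⟩
    obtain ⟨H, _, ν, _, rfl⟩ := hx
    exact wDist_nonneg F μ H ν
  set D := wDistFam 𝔥 F μ with hDdef
  have hD0 : 0 ≤ D := wDistFam_nonneg 𝔥 F μ
  rw [Metric.tendsto_atTop]
  intro ε hε
  -- UPPER BOUND data
  have hDlt : sInf {x : ℝ | ∃ H ∈ 𝔥, ∃ ν, IsWeight H ν ∧ x = wDist F μ H ν} < D + ε/4 := by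
    rw [hDdef]
    unfold wDistFam
    linarith
  obtain ⟨y, hy_mem, hy_lt⟩ := exists_lt_of_csInf_lt hSw_ne hDlt
  obtain ⟨H, hH, ν, hν, rfl⟩ := hy_mem
  obtain ⟨G1, G2, ν', hn12, hW1, hW2⟩ := product_blowup hμ hν
  have hT_ne : {x : ℝ | ∃ (GG1 GG2 : RGraph r) (ν'' : ℕ → ℝ), GG1.n = GG2.n ∧
      WIsBlowup F μ GG1 ν'' ∧ WIsBlowup H ν GG2 ν'' ∧
      x = dPrime GG1.edges GG2.edges ν''}.Nonempty :=
    ⟨dPrime G1.edges G2.edges ν', G1, G2, ν', hn12, hW1, hW2, rfl⟩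
  have hTlt : sInf {x : ℝ | ∃ (GG1 GG2 : RGraph r) (ν'' : ℕ → ℝ), GG1.n = GG2.n ∧
      WIsBlowup F μ GG1 ν'' ∧ WIsBlowup H ν GG2 ν'' ∧
      x = dPrime GG1.edges GG2.edges ν''} < D + ε/2 := by
    unfold wDist at hy_lt
    linarith
  obtain ⟨z, hz_mem, hz_lt⟩ := exists_lt_of_csInf_lt hT_ne hTlt
  obtain ⟨GG1, GG2, ν'', hn12', hW1', hW2', rfl⟩ := hz_mem
  set M := ((symmDiff GG1.edges GG2.edges).card : ℝ) with hM
  obtain ⟨N1, hN11, hN1⟩ := error_term_small M (by positivity) (by linarith : (0:ℝ) < ε/4) r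
  -- LOWER BOUND data
  set ε' : ℝ := min 1 (ε / (4 * 2 ^ r)) with hε'def
  have hε'pos : 0 < ε' := by
    apply lt_min one_pos
    positivity
  have hε'le1 : ε' ≤ 1 := min_le_left _ _
  have hε'small : 2 ^ r * ε' ≤ ε / 4 := by
    have h1 : ε' ≤ ε / (4 * 2 ^ r) := min_le_right _ _
    have h2 : (0:ℝ) < 2 ^ r := by positivity
    rw [div_mul_eq_div_div] at h1
    calc (2:ℝ) ^ r * ε' ≤ 2 ^ r * (ε / 4 / 2 ^ r) := by
          apply mul_le_mul_of_nonneg_left h1 (le_of_lt h2)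
      _ = ε / 4 := by field_simp
  set J := (Finset.range F.n).filter (fun i => 0 < μ i) with hJ
  set δ : ℝ := if h : J.Nonempty then J.inf' h μ else 1 with hδ
  have hδpos : 0 < δ := by
    rw [hδ]
    split_ifs with h
    · rw [Finset.lt_inf'_iff]
      intro i hi
      rw [hJ, Finset.mem_filter] at hi
      exact hi.2
    · exact one_pos
  have hδle : ∀ i < F.n, 0 < μ i → δ ≤ μ i := by
    intro i hi hpos
    have hiJ : i ∈ J := by
      rw [hJ, Finset.mem_filter]
      exact ⟨Finset.mem_range.2 hi, hpos⟩
    rw [hδ]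
    split_ifs with h
    · exact Finset.inf'_le μ hiJ
    · exact absurd ⟨i, hiJ⟩ h
  obtain ⟨N2, hN2⟩ := exists_nat_gt ((1 + ε') / (δ * ε'))
  -- main estimate
  refine ⟨max (max N1 1) N2, fun N hN => ?_⟩
  have hNN1 : N1 ≤ N := le_trans (le_trans (le_max_left N1 1) (le_max_left _ N2)) hN
  have hNge1 : 1 ≤ N := le_trans (le_trans (le_max_right N1 1) (le_max_left _ N2)) hN
  have hNN2 : N2 ≤ N := le_trans (le_max_right _ N2) hN
  have hQpos : (0:ℝ) < (N : ℝ) ^ r := by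
    have : (0:ℝ) < N := by exact_mod_cast hNge1
    positivity
  set d := distFam 𝔥 (blowSeq F μ N) with hd
  have hd0 : 0 ≤ d := distFam_nonneg 𝔥 (blowSeq F μ N)
  have hdQ : d ≤ (N : ℝ) ^ r := distFam_le_pow hcl hH0 hH0n N
  -- upper estimate: d / N^r ≤ D + 3ε/4
  have hupper : d / (N : ℝ) ^ r ≤ D + 3 * ε / 4 := by
    obtain ⟨HN, hHNmem, hHNn, hHNbound⟩ := upper_aux hμ hcl hH hn12' hW1' hW2' N
    have h1 : d ≤ ((symmDiff (blowSeq F μ N).edges HN.edges).card : ℝ) :=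
      distFam_le hHNmem hHNn
    have h2 := hN1 N hNN1
    have h3 : d ≤ (dPrime GG1.edges GG2.edges ν'' + ε/4) * (N : ℝ) ^ r := by
      have := hHNbound
      nlinarith [h1, h2, this]
    rw [div_le_iff₀ hQpos]
    have h4 : dPrime GG1.edges GG2.edges ν'' + ε/4 ≤ D + 3 * ε / 4 := by linarith
    nlinarith [h3, h4, hQpos]
  -- lower estimate: D ≤ d / N^r + ε/2
  have hlower : D ≤ d / (N : ℝ) ^ r + ε / 2 := by
    -- choose a near-optimal member of the family
    have hSN_ne : {x : ℝ | ∃ H' ∈ 𝔥, H'.n = (blowSeq F μ N).n ∧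
        x = ((symmDiff (blowSeq F μ N).edges H'.edges).card : ℝ)}.Nonempty := by
      obtain ⟨H', hmem, hn⟩ := exists_family_member hcl hH0 hH0n N
      exact ⟨_, H', hmem, hn, rfl⟩
    have hslack : (0:ℝ) < ε / (4 * 2 ^ r) * (N : ℝ) ^ r := by positivity
    have hdlt : sInf {x : ℝ | ∃ H' ∈ 𝔥, H'.n = (blowSeq F μ N).n ∧
        x = ((symmDiff (blowSeq F μ N).edges H'.edges).card : ℝ)}
        < d + ε / (4 * 2 ^ r) * (N : ℝ) ^ r := by
      rw [hd]
      unfold distFam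
      linarith
    obtain ⟨w, hw_mem, hw_lt⟩ := exists_lt_of_csInf_lt hSN_ne hdlt
    obtain ⟨H', hH'mem, hH'n, rfl⟩ := hw_mem
    have hbig : ∀ i < F.n, 0 < μ i → 1 + ε' ≤ μ i * N * ε' := by
      intro i hi hpos
      have h1 : (1 + ε') / (δ * ε') < (N : ℝ) := by
        calc (1 + ε') / (δ * ε') < N2 := hN2
          _ ≤ N := by exact_mod_cast hNN2
      have h2 : (0:ℝ) < δ * ε' := by positivity
      rw [div_lt_iff₀ h2] at h1
      have h3 : δ ≤ μ i := hδle i hi hpos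
      have hN0 : (0:ℝ) < N := by exact_mod_cast hNge1
      nlinarith
    have hla := lower_aux hμ H' hH'mem hH'n hε'pos hNge1 hbig
    -- algebra
    set S := ((symmDiff (blowSeq F μ N).edges H'.edges).card : ℝ) with hS
    set P := (1 + ε') ^ r with hP
    have hP0 : 0 < P := by positivity
    have hPle2 : P ≤ 2 ^ r := by
      rw [hP]
      apply pow_le_pow_left₀ (by linarith)
      linarith
    have hPle : P ≤ 1 + ε / 4 := by
      rw [hP]
      calc (1 + ε') ^ r ≤ 1 + (2 ^ r - 1) * ε' := one_add_pow_le (le_of_lt hε'pos) hε'le1 r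
        _ ≤ 1 + 2 ^ r * ε' := by nlinarith [hε'pos]
        _ ≤ 1 + ε / 4 := by linarith
    rw [div_pow] at hla
    rw [← hP] at hla
    have hS0 : 0 ≤ S := by rw [hS]; positivity
    have step1 : S * (P / (N : ℝ) ^ r)
        ≤ (d + ε / (4 * 2 ^ r) * (N : ℝ) ^ r) * (P / (N : ℝ) ^ r) := by
      apply mul_le_mul_of_nonneg_right (le_of_lt hw_lt) (by positivity)
    have step2 : (d + ε / (4 * 2 ^ r) * (N : ℝ) ^ r) * (P / (N : ℝ) ^ r)
        = (d / (N : ℝ) ^ r) * P + ε / (4 * 2 ^ r) * P := by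
      field_simp
    have hu01 : d / (N : ℝ) ^ r ≤ 1 := by
      rw [div_le_one hQpos]
      exact hdQ
    have hu0 : 0 ≤ d / (N : ℝ) ^ r := by positivity
    have step3 : (d / (N : ℝ) ^ r) * P ≤ d / (N : ℝ) ^ r + ε / 4 := by
      nlinarith [hu01, hu0, hPle, hP0]
    have step4 : ε / (4 * 2 ^ r) * P ≤ ε / 4 := by
      have h2r : (0:ℝ) < 2 ^ r := by positivity
      calc ε / (4 * 2 ^ r) * P ≤ ε / (4 * 2 ^ r) * 2 ^ r := by
            apply mul_le_mul_of_nonneg_left hPle2 (by positivity)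
        _ = ε / 4 := by field_simp
      
    calc D ≤ S * (P / (N : ℝ) ^ r) := hla
      _ ≤ (d / (N : ℝ) ^ r) * P + ε / (4 * 2 ^ r) * P := by
          rw [← step2]; exact step1
      _ ≤ d / (N : ℝ) ^ r + ε / 4 + ε / 4 := by linarith
      _ = d / (N : ℝ) ^ r + ε / 2 := by ring
  rw [Real.dist_eq, abs_lt]
  constructor
  · linarith
  · linarith

end final
/-- For every weighted `r`-graph `(F, μ)` there is a sequence of blowups `G n`
of `F` with `v(G n) → ∞`, `|G n|/v(G n)^r → λ(F, μ)`, and `d_𝔥(G n)/v(G n)^r → d^w_𝔥(F, μ)`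
for every clonable family `𝔥`. -/
theorem exists_blowup_sequence {r : ℕ} (F : RGraph r) (μ : ℕ → ℝ) (hμ : IsWeight F μ) :
    ∃ G : ℕ → RGraph r,
      (∀ n, IsBlowup F (G n)) ∧
      Tendsto (fun n => (G n).n) atTop atTop ∧
      Tendsto (fun n => ((G n).edges.card : ℝ) / ((G n).n : ℝ) ^ r) atTop (nhds (lamW F μ)) ∧
      ∀ 𝔥 : Set (RGraph r), Clonable 𝔥 →
        Tendsto (fun n => distFam 𝔥 (G n) / ((G n).n : ℝ) ^ r) atTop
          (nhds (wDistFam 𝔥 F μ)) := by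
  refine ⟨fun n => blowSeq F μ n, fun n => ⟨_, isBlowupMap_blowSeq hμ n⟩, ?_, ?_, ?_⟩
  · show Tendsto (fun n : ℕ => n) atTop atTop
    exact tendsto_id
  · exact tendsto_density hμ
  · intro 𝔥 hcl
    exact tendsto_dist F μ hμ 𝔥 hcl

end TuranGT
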